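/- arXiv:1212.5705 — 8 statements merged into one kernel-verified Lean document; each statement's English description precedes it below -/
import Mathlib

section
/- Let A_n denote the total area between all lattice paths from (0,0) to (n,n) using East and North steps that stay weakly below the line y=x, and the line y=x itself (summed over all such paths). Then A_n = 4^n/2 - (1/4)*binomial(2n+2, n+1). -/
open Finset

def pset (M d : ℕ) : Finset (Finset ℕ) :=
  (Finset.range M).powerset.filter
    (fun B => 2 * B.card + d = M ∧ ∀ i ≤ M, 2 * (B.filter (· < i)).card ≤ i)

def wt (M : ℕ) (B : Finset ℕ) : ℕ := ∑ i ∈ Finset.Icc 1 M, (i - 2 * (B.filter (· < i)).card)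

def Ncnt (M d : ℕ) : ℕ := (pset M d).card

def Fsm (M d : ℕ) : ℕ := ∑ B ∈ pset M d, wt M B

lemma mem_pset {M d : ℕ} {B : Finset ℕ} :
    B ∈ pset M d ↔ B ⊆ Finset.range M ∧ 2 * B.card + d = M ∧
      ∀ i ≤ M, 2 * (B.filter (· < i)).card ≤ i := by
  simp [pset, Finset.mem_filter, Finset.mem_powerset, and_assoc]

lemma filter_lt_erase (B : Finset ℕ) (m i : ℕ) (hi : i ≤ m) :
    (B.erase m).filter (· < i) = B.filter (· < i) := by
  ext j
  simp only [Finset.mem_filter, Finset.mem_erase]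
  constructor
  · rintro ⟨⟨_, hB⟩, hlt⟩; exact ⟨hB, hlt⟩
  · rintro ⟨hB, hlt⟩; exact ⟨⟨by omega, hB⟩, hlt⟩

lemma filter_lt_insert (B : Finset ℕ) (m i : ℕ) (hi : i ≤ m) :
    (insert m B).filter (· < i) = B.filter (· < i) := by
  ext j
  simp only [Finset.mem_filter, Finset.mem_insert]
  constructor
  · rintro ⟨hj, hlt⟩
    rcases hj with rfl | hB
    · omega
    · exact ⟨hB, hlt⟩
  · rintro ⟨hB, hlt⟩; exact ⟨Or.inr hB, hlt⟩

lemma filter_lt_all {B : Finset ℕ} {M : ℕ} (h : B ⊆ Finset.range M) :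
    B.filter (· < M) = B := by
  apply Finset.filter_true_of_mem
  intro j hj
  exact Finset.mem_range.mp (h hj)

lemma pset_empty {M d : ℕ} (h : M < d) : pset M d = ∅ := by
  rw [Finset.eq_empty_iff_forall_notMem]
  intro B hB
  rcases mem_pset.mp hB with ⟨_, hc, _⟩
  omega

lemma pset_zero : pset 0 0 = {∅} := by
  ext B
  simp only [mem_pset, Finset.mem_singleton]
  constructor
  · rintro ⟨hs, _, _⟩
    simpa [Finset.subset_empty] using hs
  · rintro rfl
    refine ⟨by simp, by simp, ?_⟩
    intro i hi; simp

lemma pset_succ_pos (m e : ℕ) :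
    pset (m+1) (e+1) = (pset m (e+2)).image (insert m) ∪ pset m e := by
  ext B
  simp only [Finset.mem_union, Finset.mem_image, mem_pset]
  constructor
  · rintro ⟨hsub, hc, hcond⟩
    by_cases hm : m ∈ B
    · left
      have hcB : 1 ≤ B.card := Finset.card_pos.mpr ⟨m, hm⟩
      refine ⟨B.erase m, ⟨?_, ?_, ?_⟩, Finset.insert_erase hm⟩
      · intro j hj
        have h1 := Finset.mem_of_mem_erase hj
        have h2 := Finset.ne_of_mem_erase hj
        have := Finset.mem_range.mp (hsub h1)
        exact Finset.mem_range.mpr (by omega)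
      · rw [Finset.card_erase_of_mem hm]; omega
      · intro i hi
        rw [filter_lt_erase B m i hi]
        exact hcond i (by omega)
    · right
      refine ⟨?_, by omega, ?_⟩
      · intro j hj
        have := Finset.mem_range.mp (hsub hj)
        have : j ≠ m := fun h => hm (h ▸ hj)
        exact Finset.mem_range.mpr (by omega)
      · intro i hi
        exact hcond i (by omega)
  · rintro (⟨B', ⟨hsub, hc, hcond⟩, rfl⟩ | ⟨hsub, hc, hcond⟩)
    · have hm : m ∉ B' := fun h => by simpa using Finset.mem_range.mp (hsub h)
      have hcard : (insert m B').card = B'.card + 1 := Finset.card_insert_of_notMem hm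
      refine ⟨?_, by omega, ?_⟩
      · intro j hj
        rcases Finset.mem_insert.mp hj with rfl | hB
        · exact Finset.mem_range.mpr (by omega)
        · exact Finset.mem_range.mpr (by have := Finset.mem_range.mp (hsub hB); omega)
      · intro i hi
        rcases Nat.lt_or_ge i (m+1) with h | h
        · rw [filter_lt_insert B' m i (by omega)]
          exact hcond i (by omega)
        · have hi' : i = m + 1 := by omega
          subst hi'
          have : (insert m B').filter (· < m+1) = insert m B' := by
            apply filter_lt_all
            intro j hj
            rcases Finset.mem_insert.mp hj with rfl | hB
            · exact Finset.mem_range.mpr (by omega)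
            · exact Finset.mem_range.mpr (by have := Finset.mem_range.mp (hsub hB); omega)
          rw [this, hcard]
          omega
    · refine ⟨fun j hj => Finset.mem_range.mpr (by have := Finset.mem_range.mp (hsub hj); omega),
        by omega, ?_⟩
      intro i hi
      rcases Nat.lt_or_ge i (m+1) with h | h
      · exact hcond i (by omega)
      · have hi' : i = m + 1 := by omega
        subst hi'
        rw [filter_lt_all (by intro j hj; exact Finset.mem_range.mpr (by have := Finset.mem_range.mp (hsub hj); omega) : B ⊆ Finset.range (m+1))]
        omega

lemma pset_succ_zero (m : ℕ) :
    pset (m+1) 0 = (pset m 1).image (insert m) := by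
  ext B
  simp only [Finset.mem_image, mem_pset]
  constructor
  · rintro ⟨hsub, hc, hcond⟩
    have hm : m ∈ B := by
      by_contra hm
      have hBr : B ⊆ Finset.range m := by
        intro j hj
        have := Finset.mem_range.mp (hsub hj)
        have : j ≠ m := fun h => hm (h ▸ hj)
        exact Finset.mem_range.mpr (by omega)
      have hfe : B.filter (· < m) = B := filter_lt_all hBr
      have := hcond m (by omega)
      rw [hfe] at this
      omega
    have hcB : 1 ≤ B.card := Finset.card_pos.mpr ⟨m, hm⟩
    refine ⟨B.erase m, ⟨?_, ?_, ?_⟩, Finset.insert_erase hm⟩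
    · intro j hj
      have h1 := Finset.mem_of_mem_erase hj
      have h2 := Finset.ne_of_mem_erase hj
      have := Finset.mem_range.mp (hsub h1)
      exact Finset.mem_range.mpr (by omega)
    · rw [Finset.card_erase_of_mem hm]; omega
    · intro i hi
      rw [filter_lt_erase B m i hi]
      exact hcond i (by omega)
  · rintro ⟨B', ⟨hsub, hc, hcond⟩, rfl⟩
    have hm : m ∉ B' := fun h => by simpa using Finset.mem_range.mp (hsub h)
    have hcard : (insert m B').card = B'.card + 1 := Finset.card_insert_of_notMem hm
    have hsub' : insert m B' ⊆ Finset.range (m+1) := by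
      intro j hj
      rcases Finset.mem_insert.mp hj with rfl | hB
      · exact Finset.mem_range.mpr (by omega)
      · exact Finset.mem_range.mpr (by have := Finset.mem_range.mp (hsub hB); omega)
    refine ⟨hsub', by omega, ?_⟩
    intro i hi
    rcases Nat.lt_or_ge i (m+1) with h | h
    · rw [filter_lt_insert B' m i (by omega)]
      exact hcond i (by omega)
    · have hi' : i = m + 1 := by omega
      subst hi'
      rw [filter_lt_all hsub', hcard]
      omega

lemma insert_injOn (m : ℕ) (d : ℕ) : Set.InjOn (insert m) (pset m d : Set (Finset ℕ)) := by
  intro B1 h1 B2 h2 h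
  have hm1 : m ∉ B1 := fun hh => by
    simpa using Finset.mem_range.mp ((mem_pset.mp h1).1 hh)
  have hm2 : m ∉ B2 := fun hh => by
    simpa using Finset.mem_range.mp ((mem_pset.mp h2).1 hh)
  rw [← Finset.erase_insert hm1, h, Finset.erase_insert hm2]

lemma disj_branches (m e : ℕ) : Disjoint ((pset m (e+2)).image (insert m)) (pset m e) := by
  rw [Finset.disjoint_left]
  rintro B hB hB'
  rcases Finset.mem_image.mp hB with ⟨B', _, rfl⟩
  have hm : m ∈ insert m B' := Finset.mem_insert_self m B'
  have := Finset.mem_range.mp ((mem_pset.mp hB').1 hm)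
  omega

lemma Ncnt_succ_pos (m e : ℕ) : Ncnt (m+1) (e+1) = Ncnt m (e+2) + Ncnt m e := by
  unfold Ncnt
  rw [pset_succ_pos, Finset.card_union_of_disjoint (disj_branches m e),
    Finset.card_image_of_injOn (insert_injOn m (e+2))]

lemma Ncnt_succ_zero (m : ℕ) : Ncnt (m+1) 0 = Ncnt m 1 := by
  unfold Ncnt
  rw [pset_succ_zero, Finset.card_image_of_injOn (insert_injOn m 1)]

lemma wt_succ (m : ℕ) (B : Finset ℕ) :
    wt (m+1) B = wt m B + ((m+1) - 2 * (B.filter (· < m+1)).card) := by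
  unfold wt
  exact Finset.sum_Icc_succ_top (by omega) _

lemma wt_insert_eq (m : ℕ) (B : Finset ℕ) : wt m (insert m B) = wt m B := by
  unfold wt
  apply Finset.sum_congr rfl
  intro i hi
  have hi' : i ≤ m := (Finset.mem_Icc.mp hi).2
  rw [filter_lt_insert B m i hi']

lemma wt_succ_mem {m d : ℕ} {B : Finset ℕ} (hB : B ∈ pset (m+1) d) :
    wt (m+1) B = wt m B + d := by
  rcases mem_pset.mp hB with ⟨hsub, hc, _⟩
  rw [wt_succ, filter_lt_all hsub]
  omega

lemma Fsm_succ_pos (m e : ℕ) :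
    Fsm (m+1) (e+1) = Fsm m (e+2) + Fsm m e + (e+1) * (Ncnt m (e+2) + Ncnt m e) := by
  unfold Fsm
  rw [pset_succ_pos]
  rw [Finset.sum_union (disj_branches m e)]
  rw [Finset.sum_image (fun x hx y hy h => insert_injOn m (e+2) hx hy h)]
  have h1 : ∀ B' ∈ pset m (e+2), wt (m+1) (insert m B') = wt m B' + (e+1) := by
    intro B' hB'
    have hmem : insert m B' ∈ pset (m+1) (e+1) := by
      rw [pset_succ_pos]
      exact Finset.mem_union_left _ (Finset.mem_image_of_mem _ hB')
    rw [wt_succ_mem hmem, wt_insert_eq]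
  have h2 : ∀ B ∈ pset m e, wt (m+1) B = wt m B + (e+1) := by
    intro B hB
    have hmem : B ∈ pset (m+1) (e+1) := by
      rw [pset_succ_pos]
      exact Finset.mem_union_right _ hB
    exact wt_succ_mem hmem
  have A1 : ∑ B' ∈ pset m (e+2), wt (m+1) (insert m B') = Fsm m (e+2) + (e+1) * Ncnt m (e+2) := by
    rw [Finset.sum_congr rfl h1, Finset.sum_add_distrib]
    simp [Fsm, Ncnt, mul_comm]
  have A2 : ∑ B ∈ pset m e, wt (m+1) B = Fsm m e + (e+1) * Ncnt m e := by
    rw [Finset.sum_congr rfl h2, Finset.sum_add_distrib]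
    simp [Fsm, Ncnt, mul_comm]
  rw [A1, A2]
  unfold Fsm
  ring

lemma Fsm_succ_zero (m : ℕ) : Fsm (m+1) 0 = Fsm m 1 := by
  unfold Fsm
  rw [pset_succ_zero]
  rw [Finset.sum_image (fun x hx y hy h => insert_injOn m 1 hx hy h)]
  apply Finset.sum_congr rfl
  intro B' hB'
  have hmem : insert m B' ∈ pset (m+1) 0 := by
    rw [pset_succ_zero]
    exact Finset.mem_image_of_mem _ hB'
  rw [wt_succ_mem hmem, wt_insert_eq]
  omega

lemma Ncnt_zero : Ncnt 0 0 = 1 := by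
  unfold Ncnt; rw [pset_zero]; rfl

lemma Fsm_zero : Fsm 0 0 = 0 := by
  unfold Fsm wt
  simp

lemma Ncnt_empty {m d : ℕ} (h : m < d) : Ncnt m d = 0 := by
  unfold Ncnt; rw [pset_empty h]; rfl

lemma Fsm_empty {m d : ℕ} (h : m < d) : Fsm m d = 0 := by
  unfold Fsm; rw [pset_empty h]; rfl


noncomputable def ch (m : ℕ) (j : ℤ) : ℤ := if 0 ≤ j then (m.choose j.toNat : ℤ) else 0

noncomputable def psz (m : ℕ) (j : ℤ) : ℤ :=
  if 0 ≤ j then ∑ i ∈ Finset.range (j.toNat + 1), (m.choose i : ℤ) else 0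

lemma ch_nat (m k : ℕ) : ch m (k : ℤ) = (m.choose k : ℤ) := by
  simp [ch]

lemma ch_neg {m : ℕ} {j : ℤ} (h : j < 0) : ch m j = 0 := by
  simp [ch, not_le.mpr h]

lemma ch_zero (m : ℕ) : ch m 0 = 1 := by simp [ch]

lemma psz_nat (m t : ℕ) : psz m (t : ℤ) = ∑ i ∈ Finset.range (t+1), (m.choose i : ℤ) := by
  simp [psz]

lemma ch_pascal (m : ℕ) (j : ℤ) : ch (m+1) j = ch m j + ch m (j-1) := by
  rcases lt_trichotomy j 0 with h | h | h
  · rw [ch_neg h, ch_neg h, ch_neg (by omega)]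
    ring
  · subst h
    rw [ch_zero, ch_zero, ch_neg (by norm_num)]
    ring
  · obtain ⟨t, rfl⟩ : ∃ t : ℕ, j = (t : ℤ) + 1 := ⟨(j-1).toNat, by omega⟩
    have h2 : ((t : ℤ) + 1 - 1) = ((t : ℕ) : ℤ) := by ring
    have h1 : ((t : ℤ) + 1) = ((t+1 : ℕ) : ℤ) := by push_cast; ring
    rw [h2, h1, ch_nat, ch_nat, ch_nat, Nat.choose_succ_succ']
    push_cast; ring

lemma ch_absorb (m : ℕ) (j : ℤ) : (j+1) * ch m (j+1) = ((m:ℤ) - j) * ch m j := by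
  rcases lt_trichotomy j (-1) with h | h | h
  · rw [ch_neg (by omega), ch_neg (by omega)]; ring
  · subst h
    rw [show ch m (-1:ℤ) = 0 from ch_neg (by norm_num)]
    ring
  · obtain ⟨t, rfl⟩ : ∃ t : ℕ, j = (t : ℤ) := ⟨j.toNat, by omega⟩
    have h1 : ((t : ℤ) + 1) = ((t+1 : ℕ) : ℤ) := by push_cast; ring
    rw [h1, ch_nat, ch_nat]
    rcases le_or_gt t m with hle | hlt
    · have hc := Nat.choose_succ_right_eq m t
      have hcast : ((m - t : ℕ) : ℤ) = (m:ℤ) - t := by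
        push_cast [hle]; ring
      calc ((t+1:ℕ):ℤ) * (m.choose (t+1) : ℤ)
          = ((m.choose (t+1) * (t+1) : ℕ) : ℤ) := by push_cast; ring
        _ = ((m.choose t * (m - t) : ℕ) : ℤ) := congrArg (fun x : ℕ => (x:ℤ)) hc
        _ = ((m:ℤ) - t) * (m.choose t : ℤ) := by rw [Nat.cast_mul, hcast]; ring
    · rw [Nat.choose_eq_zero_of_lt (by omega), Nat.choose_eq_zero_of_lt hlt]
      push_cast; ring

lemma psz_neg {m : ℕ} {j : ℤ} (h : j < 0) : psz m j = 0 := by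
  simp [psz, not_le.mpr h]

lemma psz_sub (m : ℕ) (j : ℤ) : psz m j = psz m (j-1) + ch m j := by
  rcases lt_trichotomy j 0 with h | h | h
  · rw [psz_neg h, psz_neg (by omega), ch_neg h]; ring
  · subst h
    have h1 : psz m (0:ℤ) = 1 := by simpa using psz_nat m 0
    have h0 : psz m ((0:ℤ)-1) = 0 := psz_neg (by norm_num)
    rw [h1, h0, ch_zero]
    norm_num
  · obtain ⟨t, rfl⟩ : ∃ t : ℕ, j = (t : ℤ) + 1 := ⟨(j-1).toNat, by omega⟩
    have h2 : ((t : ℤ) + 1 - 1) = ((t : ℕ) : ℤ) := by ring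
    have h1 : ((t : ℤ) + 1) = ((t+1 : ℕ) : ℤ) := by push_cast; ring
    rw [h2, h1, ch_nat, psz_nat, psz_nat, Finset.sum_range_succ]

lemma psz_rec_nat (m t : ℕ) : psz (m+1) (t:ℤ) = 2 * psz m (t:ℤ) - ch m (t:ℤ) := by
  induction t with
  | zero =>
    rw [psz_nat, psz_nat, ch_nat]
    simp
  | succ u ih =>
    have e1 : psz (m+1) ((u+1:ℕ):ℤ) = psz (m+1) (u:ℤ) + ((m+1).choose (u+1) : ℤ) := by
      rw [psz_nat, psz_nat, Finset.sum_range_succ]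
    have e2 : psz m ((u+1:ℕ):ℤ) = psz m (u:ℤ) + (m.choose (u+1) : ℤ) := by
      rw [psz_nat, psz_nat, Finset.sum_range_succ]
    have e3 : ((m+1).choose (u+1) : ℤ) = (m.choose u : ℤ) + (m.choose (u+1) : ℤ) := by
      exact_mod_cast Nat.choose_succ_succ' m u
    rw [e1, e2, ch_nat, e3]
    rw [ch_nat] at ih
    linarith [ih]

lemma psz_rec (m : ℕ) (j : ℤ) : psz (m+1) j = 2 * psz m j - ch m j := by
  rcases lt_trichotomy j 0 with h | h | h
  · rw [psz_neg h, psz_neg h, ch_neg h]; ring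
  · subst h
    have := psz_rec_nat m 0
    simpa using this
  · obtain ⟨t, rfl⟩ : ∃ t : ℕ, j = (t : ℤ) := ⟨j.toNat, by omega⟩
    exact psz_rec_nat m t

lemma ch_symm_half (k : ℕ) : ch (2*k+1) ((k:ℤ)+1) = ch (2*k+1) (k:ℤ) := by
  have h1 : ((k : ℤ) + 1) = ((k+1 : ℕ) : ℤ) := by push_cast; ring
  rw [h1, ch_nat, ch_nat]
  exact_mod_cast Nat.choose_symm_half k

lemma halfsum (n : ℕ) : 2 * (∑ i ∈ Finset.range n, Nat.choose (2*n) i) + Nat.choose (2*n) n = 4^n := by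
  have h2 : ∑ i ∈ Finset.range (n+1), (2*n+1).choose i = 4^n := Nat.sum_range_choose_halfway n
  have h3 : ∑ i ∈ Finset.range (n+1), (2*n+1).choose i
      = (∑ i ∈ Finset.range n, (2*n+1).choose (i+1)) + 1 := by
    rw [Finset.sum_range_succ']
    simp
  have h4 : ∀ i, (2*n+1).choose (i+1) = (2*n).choose i + (2*n).choose (i+1) := by
    intro i
    exact Nat.choose_succ_succ' (2*n) i
  have h5 : ∑ i ∈ Finset.range n, (2*n+1).choose (i+1)
      = (∑ i ∈ Finset.range n, (2*n).choose i) + (∑ i ∈ Finset.range n, (2*n).choose (i+1)) := by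
    rw [← Finset.sum_add_distrib]
    exact Finset.sum_congr rfl (fun i _ => h4 i)
  have h6 : (∑ i ∈ Finset.range n, (2*n).choose (i+1)) + 1
      = (∑ i ∈ Finset.range n, (2*n).choose i) + (2*n).choose n := by
    have ha : ∑ i ∈ Finset.range (n+1), (2*n).choose i
        = (∑ i ∈ Finset.range n, (2*n).choose (i+1)) + 1 := by
      rw [Finset.sum_range_succ']
      simp
    have hb : ∑ i ∈ Finset.range (n+1), (2*n).choose i
        = (∑ i ∈ Finset.range n, (2*n).choose i) + (2*n).choose n := Finset.sum_range_succ _ n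
    omega
  omega


lemma main_closed : ∀ m d k : ℕ, d + 2*k = m →
    ((Ncnt m d : ℤ) = ch m (k:ℤ) - ch m ((k:ℤ)-1)) ∧
    (2 * (Fsm m d : ℤ) = ((d:ℤ)+1) * (4 * psz m ((k:ℤ)-1) + ((d:ℤ)+(k:ℤ)) * ch m (k:ℤ)
      - ((k:ℤ)+3) * ch m ((k:ℤ)-1))) := by
  intro m
  induction m with
  | zero =>
    intro d k h
    obtain ⟨rfl, rfl⟩ : d = 0 ∧ k = 0 := by omega
    have hN : (Ncnt 0 0 : ℤ) = 1 := by rw [Ncnt_zero]; norm_num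
    have hF : (Fsm 0 0 : ℤ) = 0 := by rw [Fsm_zero]; norm_num
    have c1 : ch 0 ((0:ℕ):ℤ) = 1 := by rw [ch_nat]; norm_num
    have c2 : ch 0 (((0:ℕ):ℤ)-1) = 0 := ch_neg (by simp)
    have p2 : psz 0 (((0:ℕ):ℤ)-1) = 0 := psz_neg (by simp)
    rw [hN, hF, c1, c2, p2]
    norm_num
  | succ m ih =>
    intro d k hdk
    cases d with
    | zero =>
      cases k with
      | zero => exact absurd hdk (by omega)
      | succ k' =>
        have hm : m = 2*k'+1 := by omega
        subst hm
        obtain ⟨ihN, ihF⟩ := ih 1 k' (by omega)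
        push_cast at ihN ihF
        have n0 : (Ncnt (2*k'+1+1) 0 : ℤ) = (Ncnt (2*k'+1) 1 : ℤ) := by
          exact_mod_cast congrArg (fun x : ℕ => (x:ℤ)) (Ncnt_succ_zero (2*k'+1))
        have g0 : (Fsm (2*k'+1+1) 0 : ℤ) = (Fsm (2*k'+1) 1 : ℤ) := by
          exact_mod_cast congrArg (fun x : ℕ => (x:ℤ)) (Fsm_succ_zero (2*k'+1))
        have g2 := ch_pascal (2*k'+1) ((k':ℤ)+1)
        rw [show ((k':ℤ)+1-1) = (k':ℤ) from by ring] at g2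
        have g3 := ch_pascal (2*k'+1) ((k':ℤ))
        have g6 : ch (2*k'+1) ((k':ℤ)+1) = ch (2*k'+1) (k':ℤ) := ch_symm_half k'
        have g4 := psz_rec (2*k'+1) ((k':ℤ))
        have g5 := psz_sub (2*k'+1) ((k':ℤ))
        have g7 := ch_absorb (2*k'+1) ((k':ℤ)-1)
        rw [show ((k':ℤ)-1+1) = (k':ℤ) from by ring] at g7
        push_cast at g7
        constructor
        · push_cast
          rw [show ((k':ℤ)+1-1) = (k':ℤ) from by ring]
          linear_combination n0 + ihN - g2 + g3 - g6
        · push_cast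
          rw [show ((k':ℤ)+1-1) = (k':ℤ) from by ring]
          linear_combination 2*g0 + ihF - ((k':ℤ)+1)*g2 + ((k':ℤ)+4)*g3 - 4*g4 - 8*g5
            - ((k':ℤ)+1)*g6 + g7
    | succ e =>
      cases k with
      | zero =>
        have he : e = m := by omega
        subst he
        obtain ⟨ihN, ihF⟩ := ih e 0 (by omega)
        have cz1 : ch e ((0:ℕ):ℤ) = 1 := by rw [ch_nat]; norm_num
        have cz2 : ch e (((0:ℕ):ℤ)-1) = 0 := ch_neg (by simp)
        have pz2 : psz e (((0:ℕ):ℤ)-1) = 0 := psz_neg (by simp)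
        rw [cz1, cz2] at ihN
        rw [cz1, cz2, pz2] at ihF
        push_cast at ihN ihF
        have n0 : (Ncnt (e+1) (e+1) : ℤ) = (Ncnt e (e+2) : ℤ) + (Ncnt e e : ℤ) := by
          exact_mod_cast congrArg (fun x : ℕ => (x:ℤ)) (Ncnt_succ_pos e e)
        have f0 : (Fsm (e+1) (e+1) : ℤ)
            = (Fsm e (e+2) : ℤ) + (Fsm e e : ℤ) + ((e:ℤ)+1)*((Ncnt e (e+2) : ℤ) + (Ncnt e e : ℤ)) := by
          have := Fsm_succ_pos e e
          push_cast [this]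
          ring
        have hne : (Ncnt e (e+2) : ℤ) = 0 := by rw [Ncnt_empty (by omega)]; norm_num
        have hfe : (Fsm e (e+2) : ℤ) = 0 := by rw [Fsm_empty (by omega)]; norm_num
        have cz1' : ch (e+1) ((0:ℕ):ℤ) = 1 := by rw [ch_nat]; norm_num
        have cz2' : ch (e+1) (((0:ℕ):ℤ)-1) = 0 := ch_neg (by simp)
        have pz2' : psz (e+1) (((0:ℕ):ℤ)-1) = 0 := psz_neg (by simp)
        constructor
        · rw [cz1', cz2']
          push_cast
          linear_combination n0 + hne + ihN
        · rw [cz1', cz2', pz2']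
          push_cast
          linear_combination 2*f0 + 2*hfe + ihF + (2*(e:ℤ)+2)*hne + (2*(e:ℤ)+2)*ihN
      | succ k'' =>
        have hm : m = e + 2*k'' + 2 := by omega
        subst hm
        obtain ⟨h1, h3⟩ := ih (e+2) k'' (by omega)
        obtain ⟨h2, h4⟩ := ih e (k''+1) (by omega)
        push_cast at h1 h2 h3 h4
        rw [show ((k'':ℤ)+1-1) = (k'':ℤ) from by ring] at h2 h4
        have n0 : (Ncnt (e+2*k''+2+1) (e+1) : ℤ)
            = (Ncnt (e+2*k''+2) (e+2) : ℤ) + (Ncnt (e+2*k''+2) e : ℤ) := by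
          exact_mod_cast congrArg (fun x : ℕ => (x:ℤ)) (Ncnt_succ_pos (e+2*k''+2) e)
        have h0 : (Fsm (e+2*k''+2+1) (e+1) : ℤ)
            = (Fsm (e+2*k''+2) (e+2) : ℤ) + (Fsm (e+2*k''+2) e : ℤ)
              + ((e:ℤ)+1)*((Ncnt (e+2*k''+2) (e+2) : ℤ) + (Ncnt (e+2*k''+2) e : ℤ)) := by
          have := Fsm_succ_pos (e+2*k''+2) e
          push_cast [this]
          ring
        have h5 := ch_pascal (e+2*k''+2) ((k'':ℤ)+1)
        rw [show ((k'':ℤ)+1-1) = (k'':ℤ) from by ring] at h5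
        have h6 := ch_pascal (e+2*k''+2) ((k'':ℤ))
        have h7 := psz_rec (e+2*k''+2) ((k'':ℤ))
        have h8 := psz_sub (e+2*k''+2) ((k'':ℤ))
        have h9 := ch_absorb (e+2*k''+2) ((k'':ℤ))
        push_cast at h9
        have h10 := ch_absorb (e+2*k''+2) ((k'':ℤ)-1)
        rw [show ((k'':ℤ)-1+1) = (k'':ℤ) from by ring] at h10
        push_cast at h10
        constructor
        · push_cast
          rw [show ((k'':ℤ)+1-1) = (k'':ℤ) from by ring]
          linear_combination n0 + h1 + h2 - h5 + h6
        · push_cast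
          rw [show ((k'':ℤ)+1-1) = (k'':ℤ) from by ring]
          linear_combination 2*h0 + (2*(e:ℤ)+2)*h1 + (2*(e:ℤ)+2)*h2 + h3 + h4
            - ((e:ℤ)+2)*((e:ℤ)+(k'':ℤ)+2)*h5 + ((e:ℤ)+2)*((k'':ℤ)+4)*h6
            - (4*(e:ℤ)+8)*h7 - (4*(e:ℤ)+12)*h8 - h9 + h10


/-- The total area `A n` between all lattice paths from `(0,0)` to `(n,n)`
(East/North steps, encoded by the set `B` of positions of North steps among the `2n` steps)
that stay weakly below the diagonal `y = x`, and the diagonal itself, satisfies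
`4 * A n = 2 * 4^n - (2n+2).choose (n+1)`.  Here twice the area between a single path and
the diagonal equals `∑_{i=1}^{2n-1} (i - 2 * #(North steps among the first i steps))`. -/
theorem stmt0 (n : ℕ) :
    2 * (∑ B ∈ (Finset.range (2 * n)).powerset.filter
          (fun B => B.card = n ∧ ∀ i ≤ 2 * n, 2 * (B.filter (· < i)).card ≤ i),
        ∑ i ∈ Finset.Icc 1 (2 * n - 1), (i - 2 * (B.filter (· < i)).card))
      + Nat.choose (2 * n + 2) (n + 1) = 2 * 4 ^ n := by
  
  have hset : (Finset.range (2 * n)).powerset.filter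
      (fun B => B.card = n ∧ ∀ i ≤ 2 * n, 2 * (B.filter (· < i)).card ≤ i) = pset (2*n) 0 := by
    unfold pset
    apply Finset.filter_congr
    intro B _
    constructor
    · rintro ⟨h, hX⟩
      exact ⟨by omega, hX⟩
    · rintro ⟨h, hX⟩
      exact ⟨by omega, hX⟩
  rw [hset]
  rcases Nat.eq_zero_or_pos n with rfl | hn
  · norm_num [pset_zero]
  obtain ⟨n', rfl⟩ : ∃ n', n = n'+1 := ⟨n-1, by omega⟩
  have hwt : ∀ B ∈ pset (2*(n'+1)) 0,
      (∑ i ∈ Finset.Icc 1 (2*(n'+1)-1), (i - 2*(B.filter (· < i)).card)) = wt (2*(n'+1)) B := by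
    intro B hB
    have h1 : wt (2*(n'+1)) B
        = (∑ i ∈ Finset.Icc 1 (2*(n'+1)-1), (i - 2*(B.filter (· < i)).card))
          + ((2*(n'+1)-1)+1 - 2*(B.filter (· < (2*(n'+1)-1)+1)).card) := by
      unfold wt
      conv_lhs => rw [show 2*(n'+1) = (2*(n'+1)-1)+1 from by omega]
      exact Finset.sum_Icc_succ_top (by omega) _
    have hterm : (2*(n'+1)-1)+1 - 2*(B.filter (· < (2*(n'+1)-1)+1)).card = 0 := by
      rcases mem_pset.mp hB with ⟨hsub, hcard, _⟩
      rw [show (2*(n'+1)-1)+1 = 2*(n'+1) from by omega, filter_lt_all hsub]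
      omega
    rw [h1, hterm, add_zero]
  rw [Finset.sum_congr rfl hwt]
  have hFeq : (∑ B ∈ pset (2*(n'+1)) 0, wt (2*(n'+1)) B) = Fsm (2*(n'+1)) 0 := rfl
  rw [hFeq]
  -- now pure arithmetic
  have hF := (main_closed (2*(n'+1)) 0 (n'+1) (by omega)).2
  push_cast at hF
  rw [show ((n':ℤ)+1-1) = (n':ℤ) from by ring] at hF
  -- rewrite atoms to Nat.choose form
  have e1 : ch (2*(n'+1)) ((n'+1:ℕ):ℤ) = ((2*(n'+1)).choose (n'+1) : ℤ) := ch_nat _ _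
  push_cast at e1
  have e2 : ch (2*(n'+1)) ((n':ℕ):ℤ) = ((2*(n'+1)).choose n' : ℤ) := ch_nat _ _
  have e3 : psz (2*(n'+1)) ((n':ℕ):ℤ)
      = ∑ i ∈ Finset.range (n'+1), ((2*(n'+1)).choose i : ℤ) := psz_nat _ _
  rw [e2, e3] at hF
  rw [show ch (2*(n'+1)) ((n':ℤ)+1) = ((2*(n'+1)).choose (n'+1) : ℤ) from e1] at hF
  -- halfsum
  have hhalf := halfsum (n'+1)
  have hhalfz : 2 * (∑ i ∈ Finset.range (n'+1), ((2*(n'+1)).choose i : ℤ))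
      + ((2*(n'+1)).choose (n'+1) : ℤ) = 4^(n'+1) := by
    exact_mod_cast hhalf
  -- absorption : (n'+1) * C(2n,n'+1) = (n'+2) * C(2n,n')
  have habs := ch_absorb (2*(n'+1)) ((n':ℤ))
  rw [e2] at habs
  rw [show ch (2*(n'+1)) ((n':ℤ)+1) = ((2*(n'+1)).choose (n'+1) : ℤ) from e1] at habs
  push_cast at habs
  -- choose identity: C(2n+2, n+1) = 2*(C(2n,n) + C(2n,n-1)) with n = n'+1
  have e4 : (2*(n'+1)+1).choose (n'+1+1) = (2*(n'+1)+1).choose (n'+1) :=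
    Nat.choose_symm_half (n'+1)
  have e5 : (2*(n'+1)+1+1).choose (n'+1+1)
      = (2*(n'+1)+1).choose (n'+1) + (2*(n'+1)+1).choose (n'+1+1) :=
    Nat.choose_succ_succ' (2*(n'+1)+1) (n'+1)
  have e6 : (2*(n'+1)+1).choose (n'+1) = (2*(n'+1)).choose n' + (2*(n'+1)).choose (n'+1) :=
    Nat.choose_succ_succ' (2*(n'+1)) n'
  have hcc : ((2*(n'+1)+2).choose (n'+1+1) : ℤ)
      = 2*(((2*(n'+1)).choose (n'+1) : ℤ) + ((2*(n'+1)).choose n' : ℤ)) := by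
    have h' : (2*(n'+1)+2).choose (n'+1+1)
        = 2*((2*(n'+1)).choose (n'+1) + (2*(n'+1)).choose n') := by
      have hx : 2*(n'+1)+1+1 = 2*(n'+1)+2 := rfl
      rw [← hx]
      omega
    exact_mod_cast h'
  -- final: cast goal to ℤ
  have goalz : 2 * ((Fsm (2*(n'+1)) 0 : ℕ) : ℤ) + ((2*(n'+1)+2).choose (n'+1+1) : ℤ)
      = 2 * 4^(n'+1) := by
    linear_combination hF + hcc + 2*hhalfz + habs
  exact_mod_cast goalz
end

section
/- The sequence A_n defined by A_0 = 0 and A_{n+1} = 2·Σ_{k=0}^{n} A_k·C_{n-k} + (1/2)·Σ_{k=0}^{n} C_k·C_{n-k} + Σ_{k=0}^{n} k·C_k·C_{n-k} (where C_k is the k-th Catalan number) satisfies A_n = 4^n/2 - (1/4)·binomial(2n+2, n+1) for all n ≥ 0. -/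
open Finset

/-- Catalan convolution in ℚ. -/
lemma conv_cat (n : ℕ) :
    ∑ k ∈ range (n + 1), (catalan k : ℚ) * (catalan (n - k) : ℚ) = catalan (n + 1) := by
  rw [catalan_succ n]
  rw [Fin.sum_univ_eq_sum_range (fun i => catalan i * catalan (n - i)) (n + 1)]
  push_cast
  rfl

/-- Weighted catalan convolution. -/
lemma conv_kcat (n : ℕ) :
    ∑ k ∈ range (n + 1), (k : ℚ) * (catalan k : ℚ) * (catalan (n - k) : ℚ)
      = (n : ℚ) / 2 * catalan (n + 1) := by
  have h := Finset.sum_range_reflect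
    (fun k => (k : ℚ) * (catalan k : ℚ) * (catalan (n - k) : ℚ)) (n + 1)
  have key : (∑ k ∈ range (n + 1), (k : ℚ) * (catalan k : ℚ) * (catalan (n - k) : ℚ))
      + (∑ k ∈ range (n + 1), (k : ℚ) * (catalan k : ℚ) * (catalan (n - k) : ℚ))
      = (n : ℚ) * catalan (n + 1) := by
    nth_rewrite 2 [← h]
    simp only [Nat.add_sub_cancel]
    rw [← Finset.sum_add_distrib]
    have : ∀ k ∈ range (n + 1),
        (k : ℚ) * (catalan k : ℚ) * (catalan (n - k) : ℚ)
        + ((n - k : ℕ) : ℚ) * (catalan (n - k) : ℚ) * (catalan (n - (n - k)) : ℚ)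
        = (n : ℚ) * ((catalan k : ℚ) * (catalan (n - k) : ℚ)) := by
      intro k hk
      rw [Finset.mem_range] at hk
      have hk' : k ≤ n := Nat.lt_succ_iff.mp hk
      rw [Nat.sub_sub_self hk']
      have : ((n - k : ℕ) : ℚ) = (n : ℚ) - k := by
        rw [Nat.cast_sub hk']
      rw [this]; ring
    rw [Finset.sum_congr rfl this, ← Finset.mul_sum, conv_cat]
  linarith [key]

lemma cat_cb (k : ℕ) : ((k : ℚ) + 1) * catalan k = (Nat.centralBinom k : ℚ) := by
  have h := succ_mul_catalan_eq_centralBinom k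
  push_cast [← h]
  ring

/-- centralBinom convolution with catalan. -/
lemma conv_cb (n : ℕ) :
    ∑ k ∈ range (n + 1), (Nat.centralBinom k : ℚ) * (catalan (n - k) : ℚ)
      = (Nat.centralBinom (n + 1) : ℚ) / 2 := by
  calc ∑ k ∈ range (n + 1), (Nat.centralBinom k : ℚ) * (catalan (n - k) : ℚ)
      = ∑ k ∈ range (n + 1), ((k : ℚ) * (catalan k : ℚ) * (catalan (n - k) : ℚ)
          + (catalan k : ℚ) * (catalan (n - k) : ℚ)) := by
        refine Finset.sum_congr rfl fun k _ => ?_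
        rw [← cat_cb]; ring
    _ = (n : ℚ) / 2 * catalan (n + 1) + catalan (n + 1) := by
        rw [Finset.sum_add_distrib, conv_kcat, conv_cat]
    _ = (Nat.centralBinom (n + 1) : ℚ) / 2 := by
        rw [← cat_cb (n + 1)]; push_cast; ring

/-- powers of 4 convolved with catalan. -/
lemma conv_pow4 (n : ℕ) :
    ∑ k ∈ range (n + 1), (4 : ℚ) ^ k * (catalan (n - k) : ℚ)
      = ((4 : ℚ) ^ (n + 1) - Nat.centralBinom (n + 1)) / 2 := by
  induction n with
  | zero => simp [Nat.centralBinom]; norm_num [Nat.choose]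
  | succ n ih =>
    rw [Finset.sum_range_succ']
    have : ∀ k ∈ range (n + 1),
        (4 : ℚ) ^ (k + 1) * (catalan (n + 1 - (k + 1)) : ℚ)
        = 4 * ((4 : ℚ) ^ k * (catalan (n - k) : ℚ)) := by
      intro k _
      have : n + 1 - (k + 1) = n - k := by omega
      rw [this]; ring
    rw [Finset.sum_congr rfl this, ← Finset.mul_sum, ih]
    have hcb := Nat.succ_mul_centralBinom_succ (n + 1)
    have hcbQ : ((n : ℚ) + 2) * (Nat.centralBinom (n + 2) : ℚ)
        = (4 * (n : ℚ) + 6) * (Nat.centralBinom (n + 1) : ℚ) := by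
      have h1 : (((n + 1 + 1) * Nat.centralBinom (n + 1 + 1) : ℕ) : ℚ)
          = ((2 * (2 * (n + 1) + 1) * Nat.centralBinom (n + 1) : ℕ) : ℚ) := by
        exact congrArg (fun x : ℕ => (x : ℚ)) hcb
      push_cast at h1
      linear_combination h1
    have hcat := cat_cb (n + 1)
    have hne : ((n : ℚ) + 2) ≠ 0 := by positivity
    have key : (Nat.centralBinom (n + 1 + 1) : ℚ)
        = 4 * (Nat.centralBinom (n + 1) : ℚ) - 2 * (catalan (n + 1) : ℚ) := by
      have h2 : ((n : ℚ) + 2) * (Nat.centralBinom (n + 2) : ℚ)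
          = ((n : ℚ) + 2) * (4 * (Nat.centralBinom (n + 1) : ℚ) - 2 * (catalan (n + 1) : ℚ)) := by
        push_cast at hcat
        linear_combination hcbQ + 2 * hcat
      exact mul_left_cancel₀ hne h2
    rw [key]
    simp only [Nat.sub_zero, pow_zero, one_mul]
    ring

/-- the sequence `A` defined by `A 0 = 0` and the recurrence
`A (n+1) = 2 ∑ A k C (n-k) + (1/2) ∑ C k C (n-k) + ∑ k C k C (n-k)`
(where `C` is the Catalan number sequence) satisfies
`A n = 4^n / 2 - (1/4) * (2n+2).choose (n+1)`. -/
theorem stmt1 (A : ℕ → ℚ) (h0 : A 0 = 0)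
    (hrec : ∀ n : ℕ, A (n + 1) =
        2 * ∑ k ∈ Finset.range (n + 1), A k * (catalan (n - k) : ℚ)
      + (1 / 2) * ∑ k ∈ Finset.range (n + 1), (catalan k : ℚ) * (catalan (n - k) : ℚ)
      + ∑ k ∈ Finset.range (n + 1), (k : ℚ) * (catalan k : ℚ) * (catalan (n - k) : ℚ)) :
    ∀ n : ℕ, A n = 4 ^ n / 2 - (1 / 4) * (Nat.choose (2 * n + 2) (n + 1) : ℚ) := by
  intro n
  induction n using Nat.strong_induction_on with
  | _ n ih =>
    match n with
    | 0 => rw [h0]; norm_num [Nat.choose]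
    | Nat.succ n =>
      show A (n + 1) = 4 ^ (n + 1) / 2 - 1 / 4 * (Nat.choose (2 * (n + 1) + 2) (n + 1 + 1) : ℚ)
      rw [hrec n]
      have hchoose : ∀ m : ℕ, (Nat.choose (2 * m + 2) (m + 1) : ℚ)
          = (Nat.centralBinom (m + 1) : ℚ) := by
        intro m
        have h4 : 2 * m + 2 = 2 * (m + 1) := by ring
        rw [h4, Nat.centralBinom]
      have hA : ∀ k ∈ range (n + 1), A k * (catalan (n - k) : ℚ)
          = (4 ^ k / 2 - (1 / 4) * (Nat.centralBinom (k + 1) : ℚ)) * catalan (n - k) := by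
        intro k hk
        rw [Finset.mem_range] at hk
        rw [ih k (by omega), hchoose k]
      rw [Finset.sum_congr rfl hA]
      have U := conv_pow4 n
      have V := conv_cat n
      have W := conv_kcat n
      have X : ∑ k ∈ range (n + 1), (Nat.centralBinom (k + 1) : ℚ) * (catalan (n - k) : ℚ)
          = (Nat.centralBinom (n + 2) : ℚ) / 2 - catalan (n + 1) := by
        have h1 := conv_cb (n + 1)
        rw [Finset.sum_range_succ'] at h1
        have h2 : ∀ k ∈ range (n + 1),
            (Nat.centralBinom (k + 1) : ℚ) * (catalan (n + 1 - (k + 1)) : ℚ)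
            = (Nat.centralBinom (k + 1) : ℚ) * (catalan (n - k) : ℚ) := by
          intro k _
          have h5 : n + 1 - (k + 1) = n - k := by omega
          rw [h5]
        rw [Finset.sum_congr rfl h2] at h1
        simp only [Nat.centralBinom, Nat.sub_zero, Nat.choose_zero_right] at h1 ⊢
        push_cast at h1 ⊢
        linarith [h1]
      have e1 : ∑ k ∈ range (n + 1),
          (4 ^ k / 2 - (1 / 4) * (Nat.centralBinom (k + 1) : ℚ)) * catalan (n - k)
          = (1 / 2) * ∑ k ∈ range (n + 1), (4 : ℚ) ^ k * (catalan (n - k) : ℚ)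
            - (1 / 4) * ∑ k ∈ range (n + 1),
                (Nat.centralBinom (k + 1) : ℚ) * (catalan (n - k) : ℚ) := by
        rw [Finset.mul_sum, Finset.mul_sum, ← Finset.sum_sub_distrib]
        exact Finset.sum_congr rfl fun k _ => by ring
      rw [e1, U, V, W, X, hchoose (n + 1)]
      have Y := cat_cb (n + 1)
      push_cast at Y ⊢
      linear_combination Y / 2
end

section
/- Let a(n) denote the total area below all lattice paths from (0,0) to (n,n) (using East and North steps) that stay weakly below y = x, where the area below a path P is the area of the region between P and the x-axis within the square [0,n]×[0,n] lying below the path. Then a(n) = (n²/2)·C_n - (4^n/2 - (1/4)·binomial(2n+2, n+1)), where C_n = binomial(2n,n)/(n+1) is the n-th Catalan number. -/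
open Finset

def Dst (m k : ℕ) : Finset (Finset ℕ) :=
  (Finset.range m).powerset.filter
    (fun B => B.card = k ∧ ∀ i ≤ m, 2 * (B.filter (· < i)).card ≤ i)

def arN (m k : ℕ) : ℕ :=
  ∑ B ∈ Dst m k, ∑ i ∈ Finset.range m \ B, (B.filter (· < i)).card

def cntN (m k : ℕ) : ℕ := (Dst m k).card

lemma mem_Dst {m k : ℕ} {B : Finset ℕ} :
    B ∈ Dst m k ↔ B ⊆ range m ∧ B.card = k ∧ ∀ i ≤ m, 2 * (B.filter (· < i)).card ≤ i := by
  simp [Dst, and_assoc]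

lemma filter_eq_self_of_subset {m i : ℕ} {B : Finset ℕ} (hB : B ⊆ range m) (h : m ≤ i) :
    B.filter (· < i) = B := by
  apply filter_true_of_mem
  intro x hx
  exact lt_of_lt_of_le (mem_range.1 (hB hx)) h

lemma Dst_eq_empty {m k : ℕ} (h : m < 2 * k) : Dst m k = ∅ := by
  ext B
  simp only [mem_Dst, notMem_empty, iff_false, not_and]
  intro hB hcard hcond
  have := hcond m le_rfl
  rw [filter_eq_self_of_subset hB le_rfl, hcard] at this
  omega

lemma Dst_zero (m : ℕ) : Dst m 0 = {∅} := by
  ext B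
  simp only [mem_Dst, mem_singleton]
  constructor
  · rintro ⟨_, hcard, _⟩; exact card_eq_zero.1 hcard
  · rintro rfl
    exact ⟨empty_subset _, card_empty, fun i _ => by simp⟩

lemma Dst_succ_succ (m k : ℕ) :
    Dst (m+1) (k+1)
      = Dst m (k+1) ∪ (if 2*(k+1) ≤ m+1 then (Dst m k).image (insert m) else ∅) := by
  by_cases hle : 2*(k+1) ≤ m+1
  · rw [if_pos hle]
    ext B
    simp only [mem_union, mem_Dst, mem_image]
    constructor
    · rintro ⟨hB, hcard, hcond⟩
      by_cases hm : m ∈ B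
      · right
        refine ⟨B.erase m, ⟨?_, ?_, ?_⟩, ?_⟩
        · intro x hx
          have hx1 := mem_of_mem_erase hx
          have hx2 := ne_of_mem_erase hx
          have := mem_range.1 (hB hx1)
          exact mem_range.2 (by omega)
        · rw [card_erase_of_mem hm, hcard]; omega
        · intro i hi
          have hfe : (B.erase m).filter (· < i) = B.filter (· < i) := by
            ext x
            simp only [mem_filter, mem_erase]
            constructor
            · rintro ⟨⟨_, hx⟩, hxi⟩; exact ⟨hx, hxi⟩
            · rintro ⟨hx, hxi⟩; exact ⟨⟨by omega, hx⟩, hxi⟩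
          rw [hfe]
          exact hcond i (by omega)
        · exact insert_erase hm
      · left
        refine ⟨?_, hcard, fun i hi => hcond i (by omega)⟩
        intro x hx
        have := mem_range.1 (hB hx)
        have : x ≠ m := fun h => hm (h ▸ hx)
        have := mem_range.1 (hB hx)
        exact mem_range.2 (by omega)
    · rintro (⟨hB, hcard, hcond⟩ | ⟨B', ⟨hB', hcard', hcond'⟩, rfl⟩)
      · refine ⟨hB.trans (by simp [range_subset]; intro x hx; omega), hcard, ?_⟩
        intro i hi
        rcases Nat.lt_or_ge i (m+1) with h | h
        · exact hcond i (by omega)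
        · have : i = m+1 := by omega
          subst this
          rw [filter_eq_self_of_subset hB (by omega), hcard]
          have := hcond m le_rfl
          rw [filter_eq_self_of_subset hB le_rfl, hcard] at this
          omega
      · have hmB' : m ∉ B' := fun h => by simpa using mem_range.1 (hB' h)
        refine ⟨?_, ?_, ?_⟩
        · intro x hx
          rcases mem_insert.1 hx with rfl | hx
          · exact mem_range.2 (by omega)
          · exact mem_range.2 (by have := mem_range.1 (hB' hx); omega)
        · rw [card_insert_of_notMem hmB', hcard']
        · intro i hi
          rcases Nat.lt_or_ge i (m+1) with h | h
          · have hfe : (insert m B').filter (· < i) = B'.filter (· < i) := by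
              rw [filter_insert, if_neg (by omega)]
            rw [hfe]
            exact hcond' i (by omega)
          · have : i = m+1 := by omega
            subst this
            have hfe : (insert m B').filter (· < m+1) = insert m B' := by
              apply filter_true_of_mem
              intro x hx
              rcases mem_insert.1 hx with rfl | hx
              · omega
              · have := mem_range.1 (hB' hx); omega
            rw [hfe, card_insert_of_notMem hmB', hcard']
            omega
  · rw [if_neg hle, union_empty]
    rw [Dst_eq_empty (by omega), Dst_eq_empty (by omega)]

lemma sum_Dst_succ_succ {M : Type*} [AddCommMonoid M] (m k : ℕ) (f : Finset ℕ → M) :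
    ∑ B ∈ Dst (m+1) (k+1), f B
      = (∑ B ∈ Dst m (k+1), f B)
        + (if 2*(k+1) ≤ m+1 then ∑ B ∈ Dst m k, f (insert m B) else 0) := by
  by_cases hle : 2*(k+1) ≤ m+1
  · rw [Dst_succ_succ, if_pos hle, if_pos hle]
    rw [sum_union, sum_image]
    · intro B hB B' hB' h
      have h1 : m ∉ B := fun hm => by
        simpa using mem_range.1 ((mem_Dst.1 hB).1 hm)
      have h2 : m ∉ B' := fun hm => by
        simpa using mem_range.1 ((mem_Dst.1 hB').1 hm)
      have := congrArg (Finset.erase · m) h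
      simpa [erase_insert h1, erase_insert h2] using this
    · rw [disjoint_left]
      intro B hB hB'
      have h1 : m ∉ B := fun hm => by
        simpa using mem_range.1 ((mem_Dst.1 hB).1 hm)
      rcases mem_image.1 hB' with ⟨B', _, rfl⟩
      exact h1 (mem_insert_self _ _)
  · rw [Dst_succ_succ, if_neg hle, if_neg hle, union_empty, add_zero]

lemma cntN_succ_succ (m k : ℕ) :
    cntN (m+1) (k+1) = cntN m (k+1) + (if 2*(k+1) ≤ m+1 then cntN m k else 0) := by
  have h := sum_Dst_succ_succ m k (fun _ => (1 : ℕ))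
  rw [cntN, cntN, cntN, card_eq_sum_ones, card_eq_sum_ones, card_eq_sum_ones]
  exact h

lemma arN_succ_succ (m k : ℕ) :
    arN (m+1) (k+1) = (arN m (k+1) + (k+1) * cntN m (k+1))
      + (if 2*(k+1) ≤ m+1 then arN m k else 0) := by
  rw [arN, sum_Dst_succ_succ]
  congr 1
  · -- left part
    have : ∀ B ∈ Dst m (k+1),
        (∑ i ∈ Finset.range (m+1) \ B, (B.filter (· < i)).card)
          = (∑ i ∈ Finset.range m \ B, (B.filter (· < i)).card) + (k+1) := by
      intro B hB
      obtain ⟨hBs, hcard, _⟩ := mem_Dst.1 hB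
      have hmB : m ∉ B := fun hm => by simpa using mem_range.1 (hBs hm)
      have hset : Finset.range (m+1) \ B = insert m (Finset.range m \ B) := by
        ext x
        simp only [mem_sdiff, mem_range, mem_insert]
        constructor
        · rintro ⟨hx, hxB⟩
          rcases Nat.lt_or_ge x m with h | h
          · exact Or.inr ⟨h, hxB⟩
          · exact Or.inl (by omega)
        · rintro (rfl | ⟨hx, hxB⟩)
          · exact ⟨by omega, hmB⟩
          · exact ⟨by omega, hxB⟩
      rw [hset, sum_insert (by simp)]
      rw [filter_eq_self_of_subset hBs le_rfl, hcard]
      omega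
    rw [sum_congr rfl this, sum_add_distrib, sum_const, card_eq_sum_ones, smul_eq_mul]
    rw [arN, cntN, card_eq_sum_ones, sum_const, smul_eq_mul]
    ring
  · -- right part
    by_cases hle : 2*(k+1) ≤ m+1
    · rw [if_pos hle, if_pos hle]
      apply sum_congr rfl
      intro B hB
      obtain ⟨hBs, hcard, _⟩ := mem_Dst.1 hB
      have hmB : m ∉ B := fun hm => by simpa using mem_range.1 (hBs hm)
      have hset : Finset.range (m+1) \ insert m B = Finset.range m \ B := by
        ext x
        simp only [mem_sdiff, mem_range, mem_insert, not_or]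
        constructor
        · rintro ⟨hx, hxm, hxB⟩; exact ⟨by omega, hxB⟩
        · rintro ⟨hx, hxB⟩; exact ⟨by omega, by omega, hxB⟩
      rw [hset]
      apply sum_congr rfl
      intro i hi
      have hi' : i < m := mem_range.1 (mem_sdiff.1 hi).1
      rw [filter_insert, if_neg (by omega)]
    · rw [if_neg hle, if_neg hle]

lemma cntN_zero (m : ℕ) : cntN m 0 = 1 := by simp [cntN, Dst_zero]
lemma arN_zero (m : ℕ) : arN m 0 = 0 := by simp [arN, Dst_zero]
lemma cntN_eq_zero {m k : ℕ} (h : m < 2*k) : cntN m k = 0 := by simp [cntN, Dst_eq_empty h]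
lemma arN_eq_zero {m k : ℕ} (h : m < 2*k) : arN m k = 0 := by simp [arN, Dst_eq_empty h]

def Srow (m k : ℕ) : ℕ := ∑ j ∈ Finset.range (k+1), m.choose j

lemma Srow_succ_succ (m k : ℕ) : Srow (m+1) (k+1) = Srow m (k+1) + Srow m k := by
  simp only [Srow]
  rw [sum_range_succ' (fun j => (m+1).choose j), sum_range_succ' (fun j => m.choose j) (k+1)]
  simp only [Nat.choose_succ_succ, Nat.choose_zero_right]
  rw [sum_add_distrib]
  simp only [Nat.succ_eq_add_one]
  omega

lemma choose_cast_succ (m k : ℕ) (hkm : k ≤ m) :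
    (m.choose (k+1) : ℚ) * ((k:ℚ)+1) = (m.choose k : ℚ) * ((m:ℚ) - k) := by
  have h := Nat.choose_succ_right_eq m k
  have h2 := congrArg (fun x : ℕ => (x : ℚ)) h
  push_cast [Nat.cast_sub hkm] at h2
  exact h2

lemma cntQ (m : ℕ) : ∀ k, 2*k ≤ m+1 →
    (cntN m k : ℚ) = ((m:ℚ)+1-2*k)/((m:ℚ)+1-k) * (m.choose k : ℚ) := by
  induction m with
  | zero =>
    intro k hk
    have hk0 : k = 0 := by omega
    subst hk0
    norm_num [cntN_zero]
  | succ m ih =>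
    intro k hk
    match k with
    | 0 =>
      rw [cntN_zero]
      norm_num
      rw [div_self (by push_cast; linarith [Nat.cast_nonneg (α := ℚ) m])]
    | k+1 =>
      by_cases hb : 2*(k+1) ≤ m+1
      · have hkm : k < m := by omega
        have hkmQ : (k:ℚ) < m := by exact_mod_cast hkm
        rw [cntN_succ_succ, if_pos hb]
        push_cast
        rw [ih (k+1) (by omega), ih k (by omega)]
        have hd : (m.choose (k+1) : ℚ) = (m.choose k : ℚ) * ((m:ℚ) - k) / ((k:ℚ)+1) := by
          rw [eq_div_iff (by positivity)]
          exact choose_cast_succ m k (by omega)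
        have hp : ((m+1).choose (k+1) : ℚ) = (m.choose k : ℚ) + (m.choose (k+1) : ℚ) := by
          rw [Nat.choose_succ_succ]; push_cast; ring
        rw [hp, hd]
        have hmk : (m:ℚ) - k ≠ 0 := by intro h; linarith
        have h2 : ((m:ℚ)+1-k) ≠ 0 := by intro h; linarith
        have h4 : ((k:ℚ)+1) ≠ 0 := by positivity
        push_cast
        rw [show (m:ℚ)+1-((k:ℚ)+1) = (m:ℚ)-k by ring, show (m:ℚ)+1+1-((k:ℚ)+1) = (m:ℚ)+1-k by ring]
        field_simp
        ring
      · have hm : (m:ℚ) = 2*(k:ℚ) := by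
          have : m = 2*k := by omega
          exact_mod_cast this
        rw [cntN_eq_zero (by omega)]
        push_cast
        rw [hm]
        rw [show (2*(k:ℚ) + 1 + 1 - 2*((k:ℚ)+1)) = 0 from by ring]
        simp

lemma arQ (m : ℕ) : ∀ k, 2*k ≤ m+1 →
    (arN m k : ℚ) = (1 + (m:ℚ) + (m:ℚ)*(k:ℚ)/2 - 3*(k:ℚ)/2 - (k:ℚ)^2) * (m.choose k : ℚ)
      + (2*(k:ℚ) - (m:ℚ) - 1) * (Srow m k : ℚ) := by
  induction m with
  | zero =>
    intro k hk
    have hk0 : k = 0 := by omega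
    subst hk0
    norm_num [arN_zero, Srow]
  | succ m ih =>
    intro k hk
    match k with
    | 0 =>
      rw [arN_zero]
      norm_num [Srow]
      ring
    | k+1 =>
      by_cases hb : 2*(k+1) ≤ m+1
      · have hkm : k < m := by omega
        have hkmQ : (k:ℚ) < m := by exact_mod_cast hkm
        rw [arN_succ_succ, if_pos hb]
        push_cast
        rw [ih (k+1) (by omega), ih k (by omega), cntQ m (k+1) (by omega)]
        have hd : (m.choose (k+1) : ℚ) = (m.choose k : ℚ) * ((m:ℚ) - k) / ((k:ℚ)+1) := by
          rw [eq_div_iff (by positivity)]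
          exact choose_cast_succ m k (by omega)
        have hp : ((m+1).choose (k+1) : ℚ) = (m.choose k : ℚ) + (m.choose (k+1) : ℚ) := by
          rw [Nat.choose_succ_succ]; push_cast; ring
        have hs1 : (Srow (m+1) (k+1) : ℚ) = (Srow m (k+1) : ℚ) + (Srow m k : ℚ) := by
          rw [Srow_succ_succ]; push_cast; ring
        have hs2 : (Srow m (k+1) : ℚ) = (Srow m k : ℚ) + (m.choose (k+1) : ℚ) := by
          rw [Srow, Srow, sum_range_succ]; push_cast; ring
        rw [hp, hs1, hs2, hd]
        have hmk : (m:ℚ) - k ≠ 0 := by intro h; linarith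
        have h2 : ((m:ℚ)+1-k) ≠ 0 := by intro h; linarith
        have h4 : ((k:ℚ)+1) ≠ 0 := by positivity
        push_cast
        rw [show (m:ℚ)+1-((k:ℚ)+1) = (m:ℚ)-k by ring]
        field_simp
        ring
      · have hm : (m:ℚ) = 2*(k:ℚ) := by
          have : m = 2*k := by omega
          exact_mod_cast this
        rw [arN_eq_zero (by omega)]
        push_cast
        rw [hm]
        ring

lemma two_mul_Srow (n : ℕ) : 2 * Srow (2*n) n = 4^n + (2*n).choose n := by
  have hhalf := Nat.sum_range_choose_halfway n
  have e1 : Srow (2*n) n = (∑ i ∈ Finset.range n, (2*n).choose i) + (2*n).choose n := by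
    rw [Srow, sum_range_succ]
  have e2 : Srow (2*n) n = (∑ i ∈ Finset.range n, (2*n).choose (i+1)) + 1 := by
    rw [Srow, sum_range_succ' (fun j => (2*n).choose j)]
    simp
  have e3 : (∑ i ∈ Finset.range (n+1), (2*n+1).choose i)
      = ((∑ i ∈ Finset.range n, (2*n).choose i)
          + ∑ i ∈ Finset.range n, (2*n).choose (i+1)) + 1 := by
    rw [sum_range_succ' (fun j => (2*n+1).choose j)]
    simp only [Nat.choose_succ_succ, Nat.choose_zero_right]
    rw [sum_add_distrib]
  omega

lemma central_succ (n : ℕ) :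
    (n + 1) * ((2*n+2).choose (n+1)) = 2 * (2*n+1) * ((2*n).choose n) := by
  have h := Nat.succ_mul_centralBinom_succ n
  simp only [Nat.centralBinom] at h
  rw [show 2*(n+1) = 2*n+2 from by ring] at h
  exact h

/-- Let `a n` be the total area below all lattice paths from `(0,0)` to `(n,n)`
staying weakly below `y = x` (paths encoded by the set `B` of positions of North steps;
the area below a path is `∑_{i ∉ B} #(North steps among the first i steps)`).  Then
`a n = (n²/2)·C_n - (4^n/2 - (1/4)·(2n+2).choose (n+1))`, where `C_n = (2n).choose n / (n+1)`. -/
theorem stmt2 (n : ℕ) :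
    ((∑ B ∈ (Finset.range (2 * n)).powerset.filter
          (fun B => B.card = n ∧ ∀ i ≤ 2 * n, 2 * (B.filter (· < i)).card ≤ i),
        ∑ i ∈ Finset.range (2 * n) \ B, (B.filter (· < i)).card : ℕ) : ℚ)
      = (n : ℚ) ^ 2 / 2 * ((Nat.choose (2 * n) n : ℚ) / (n + 1))
        - (4 ^ n / 2 - (1 / 4) * (Nat.choose (2 * n + 2) (n + 1) : ℚ)) := by
  show ((arN (2*n) n : ℕ) : ℚ) = _
  rw [arQ (2*n) n (by omega)]
  have hn1 : ((n:ℚ)+1) ≠ 0 := by positivity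
  have hS : (Srow (2*n) n : ℚ) = ((4:ℚ)^n + ((2*n).choose n : ℚ))/2 := by
    have := two_mul_Srow n
    have h2 := congrArg (fun x : ℕ => (x : ℚ)) this
    push_cast at h2
    linarith
  have hB : (((2*n+2).choose (n+1) : ℕ) : ℚ)
      = 2*(2*(n:ℚ)+1)*(((2*n).choose n : ℕ) : ℚ)/((n:ℚ)+1) := by
    rw [eq_div_iff hn1]
    have := central_succ n
    have h2 := congrArg (fun x : ℕ => (x : ℚ)) this
    push_cast at h2
    linarith
  rw [hS, hB]
  push_cast
  field_simp
  ring
end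

section
/- The partial transversals of a finite set system A = (A_j : j ∈ J) of subsets of a finite set S form the independent sets of a matroid on S. -/
open Finset

open Classical in
noncomputable def nbr {α J : Type*} [Fintype J] (A : J → Finset α) (C : Finset α) : Finset J :=
  Finset.univ.filter (fun j => ∃ x ∈ C, x ∈ A j)

lemma mem_nbr {α J : Type*} [Fintype J] {A : J → Finset α} {C : Finset α} {j : J} :
    j ∈ nbr A C ↔ ∃ x ∈ C, x ∈ A j := by
  classical simp [nbr]

lemma nbr_mono {α J : Type*} [Fintype J] {A : J → Finset α} {C D : Finset α} (h : C ⊆ D) :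
    nbr A C ⊆ nbr A D := by
  intro j hj
  rw [mem_nbr] at *
  obtain ⟨x, hx, hxj⟩ := hj
  exact ⟨x, h hx, hxj⟩

lemma nbr_union {α J : Type*} [DecidableEq α] [DecidableEq J] [Fintype J] {A : J → Finset α}
    {C D : Finset α} : nbr A (C ∪ D) = nbr A C ∪ nbr A D := by
  ext j
  simp only [mem_nbr, Finset.mem_union]
  aesop

lemma pt_iff_hall {α J : Type*} [DecidableEq α] [Fintype J] {A : J → Finset α} {I : Finset α} :
    (∃ f : {x // x ∈ I} → J, Function.Injective f ∧ ∀ x : {x // x ∈ I}, (x : α) ∈ A (f x)) ↔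
      ∀ C ⊆ I, C.card ≤ (nbr A C).card := by
  classical
  constructor
  · rintro ⟨f, hf, hfm⟩ C hC
    rw [← Finset.card_attach (s := C)]
    apply Finset.card_le_card_of_injOn (f := fun c => f ⟨c.1, hC c.2⟩)
    · intro c _
      rw [Finset.mem_coe, mem_nbr]
      exact ⟨c.1, c.2, hfm _⟩
    · intro a _ b _ hab
      have h2 := hf hab
      rw [Subtype.mk.injEq] at h2
      exact Subtype.ext h2
  · intro h
    have cond : ∀ s : Finset {x // x ∈ I},
        s.card ≤ (s.biUnion (fun x : {x // x ∈ I} => nbr A {x.1})).card := by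
      intro s
      have hmap : s.card = (s.image Subtype.val).card :=
        (Finset.card_image_of_injective s Subtype.val_injective).symm
      rw [hmap]
      refine le_trans (h _ ?_) (Finset.card_le_card ?_)
      · intro x hx
        simp only [Finset.mem_image] at hx
        obtain ⟨y, _, rfl⟩ := hx
        exact y.2
      · intro j hj
        rw [mem_nbr] at hj
        obtain ⟨x, hx, hxj⟩ := hj
        simp only [Finset.mem_image] at hx
        obtain ⟨y, hy, rfl⟩ := hx
        rw [Finset.mem_biUnion]
        exact ⟨y, hy, by rw [mem_nbr]; exact ⟨y.1, Finset.mem_singleton_self _, hxj⟩⟩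
    obtain ⟨f, hf, hfm⟩ := (Finset.all_card_le_biUnion_card_iff_exists_injective
      (fun x : {x // x ∈ I} => nbr A {x.1})).mp cond
    refine ⟨f, hf, fun x => ?_⟩
    have hx := hfm x
    rw [mem_nbr] at hx
    obtain ⟨y, hy, hyj⟩ := hx
    rw [Finset.mem_singleton] at hy
    subst hy
    exact hyj

lemma nbr_empty {α J : Type*} [Fintype J] {A : J → Finset α} : nbr A (∅ : Finset α) = ∅ := by
  ext j; simp [mem_nbr]

lemma tight_union {α J : Type*} [DecidableEq α] [DecidableEq J] [Fintype J] {A : J → Finset α}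
    {V C D : Finset α} (hV : ∀ X ⊆ V, X.card ≤ (nbr A X).card)
    (hC : C ⊆ V) (hD : D ⊆ V) (htC : (nbr A C).card = C.card) (htD : (nbr A D).card = D.card) :
    (nbr A (C ∪ D)).card = (C ∪ D).card := by
  have h1 : (C ∪ D).card ≤ (nbr A (C ∪ D)).card := hV _ (Finset.union_subset hC hD)
  have e1 : (nbr A C ∪ nbr A D).card + (nbr A C ∩ nbr A D).card
      = (nbr A C).card + (nbr A D).card := Finset.card_union_add_card_inter _ _
  have e2 : (C ∪ D).card + (C ∩ D).card = C.card + D.card := Finset.card_union_add_card_inter _ _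
  have e3 : (C ∩ D).card ≤ (nbr A (C ∩ D)).card :=
    hV _ (Finset.Subset.trans Finset.inter_subset_left hC)
  have e4 : (nbr A (C ∩ D)).card ≤ (nbr A C ∩ nbr A D).card :=
    Finset.card_le_card (Finset.subset_inter (nbr_mono Finset.inter_subset_left)
      (nbr_mono Finset.inter_subset_right))
  have e5 : nbr A (C ∪ D) = nbr A C ∪ nbr A D := nbr_union
  rw [e5] at h1 ⊢
  omega

/-- Edmonds–Fulkerson: the partial transversals of a finite set system
`A : J → Finset α` of subsets of a finite set `S` form the independent sets of a matroid
on `S`: the family contains `∅`, is closed under subsets, and satisfies the exchange axiom. -/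
theorem stmt5 {α : Type*} [DecidableEq α] (S : Finset α) {J : Type*} [Fintype J]
    (A : J → Finset α) (hA : ∀ j, A j ⊆ S) :
    let PT : Finset α → Prop := fun I =>
      ∃ f : {x // x ∈ I} → J, Function.Injective f ∧ ∀ x : {x // x ∈ I}, (x : α) ∈ A (f x)
    PT ∅ ∧
    (∀ U V : Finset α, PT U → V ⊆ U → PT V) ∧
    (∀ U V : Finset α, PT U → PT V → U.card = V.card + 1 →
      ∃ x ∈ U \ V, PT (insert x V)) := by
  classical
  intro PT
  have hPT : ∀ I : Finset α, PT I ↔ ∀ C ⊆ I, C.card ≤ (nbr A C).card := fun I => pt_iff_hall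
  refine ⟨?_, ?_, ?_⟩
  · rw [hPT]
    intro C hC
    rw [Finset.subset_empty] at hC
    subst hC
    simp
  · intro U V hU hVU
    rw [hPT] at *
    exact fun C hC => hU C (hC.trans hVU)
  · intro U V hUpt hVpt hcard
    by_contra hcon
    push_neg at hcon
    have hUh := (hPT U).mp hUpt
    have hVh := (hPT V).mp hVpt
    -- for each x ∈ U \ V, a tight set W_x ⊆ V absorbing the neighbors of x
    have key : ∀ x ∈ U \ V, ∃ Wx ⊆ V, (nbr A Wx).card = Wx.card ∧ nbr A {x} ⊆ nbr A Wx := by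
      intro x hx
      have hxV : x ∉ V := (Finset.mem_sdiff.mp hx).2
      have hfail := hcon x hx
      rw [hPT] at hfail
      push_neg at hfail
      obtain ⟨C, hCsub, hCcard⟩ := hfail
      have hxC : x ∈ C := by
        by_contra hxC
        have : C ⊆ V := fun y hy => by
          rcases Finset.mem_insert.mp (hCsub hy) with h | h
          · exact absurd (h ▸ hy) hxC
          · exact h
        exact absurd (hVh C this) (not_le.mpr hCcard)
      set Wx := C.erase x with hWxdef
      have hWxV : Wx ⊆ V := by
        intro y hy
        have hyx := Finset.ne_of_mem_erase hy
        rcases Finset.mem_insert.mp (hCsub (Finset.mem_of_mem_erase hy)) with h | h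
        · exact absurd h hyx
        · exact h
      have hCW : C = insert x Wx := (Finset.insert_erase hxC).symm
      have hcardC : C.card = Wx.card + 1 := by
        rw [hCW, Finset.card_insert_of_notMem (Finset.notMem_erase _ _)]
      have hsub1 : nbr A Wx ⊆ nbr A C := nbr_mono (Finset.erase_subset _ _)
      have hWlow : Wx.card ≤ (nbr A Wx).card := hVh _ hWxV
      have heq : nbr A Wx = nbr A C := by
        apply Finset.eq_of_subset_of_card_le hsub1
        omega
      have h5 : (nbr A Wx).card = (nbr A C).card := by rw [heq]
      refine ⟨Wx, hWxV, by omega, ?_⟩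
      rw [heq]
      exact nbr_mono (by rw [hCW]; simp [Finset.singleton_subset_iff])
    -- union of the tight sets
    have hind : ∀ T : Finset α, T ⊆ U \ V →
        ∃ W ⊆ V, (nbr A W).card = W.card ∧ ∀ x ∈ T, nbr A {x} ⊆ nbr A W := by
      intro T
      induction T using Finset.induction_on with
      | empty => exact fun _ => ⟨∅, Finset.empty_subset _, by simp [nbr_empty], by simp⟩
      | @insert a T haT ih =>
        intro hsub
        have haUV : a ∈ U \ V := hsub (Finset.mem_insert_self _ _)
        obtain ⟨Wa, hWaV, htWa, hNa⟩ := key a haUV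
        obtain ⟨W, hWV, htW, hNW⟩ := ih (fun y hy => hsub (Finset.mem_insert_of_mem hy))
        refine ⟨Wa ∪ W, Finset.union_subset hWaV hWV, tight_union hVh hWaV hWV htWa htW, ?_⟩
        intro x hx
        rw [nbr_union]
        rcases Finset.mem_insert.mp hx with h | h
        · subst h; exact hNa.trans Finset.subset_union_left
        · exact (hNW x h).trans Finset.subset_union_right
    obtain ⟨W, hWV, htW, hNW⟩ := hind (U \ V) (Finset.Subset.refl _)
    -- final counting
    obtain ⟨f, hf, hfm⟩ := hUpt
    set T : Finset α := (U \ V) ∪ (U ∩ W) with hTdef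
    have hTU : T ⊆ U := Finset.union_subset (Finset.sdiff_subset) (Finset.inter_subset_left)
    have hTle : T.card ≤ (nbr A W).card := by
      rw [← Finset.card_attach (s := T)]
      apply Finset.card_le_card_of_injOn (f := fun t => f ⟨t.1, hTU t.2⟩)
      · intro t _
        have hmem : f ⟨t.1, hTU t.2⟩ ∈ nbr A {t.1} := by
          rw [mem_nbr]
          exact ⟨t.1, Finset.mem_singleton_self _, hfm _⟩
        rcases Finset.mem_union.mp t.2 with h | h
        · exact hNW t.1 h hmem
        · exact nbr_mono (Finset.singleton_subset_iff.mpr (Finset.mem_inter.mp h).2) hmem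
      · intro a _ b _ hab
        have h2 := hf hab
        rw [Subtype.mk.injEq] at h2
        exact Subtype.ext h2
    have hTcard : T.card = (U \ V).card + (U ∩ W).card := by
      apply Finset.card_union_of_disjoint
      apply Finset.disjoint_left.mpr
      intro x hx hx2
      exact (Finset.mem_sdiff.mp hx).2 (hWV (Finset.mem_inter.mp hx2).2)
    have hWsplit : (W ∩ U).card + (W \ U).card = W.card := by
      rw [add_comm]
      exact Finset.card_sdiff_add_card_inter _ _
    have hWU : (W ∩ U).card = (U ∩ W).card := by rw [Finset.inter_comm]
    have hWVU : (W \ U).card ≤ (V \ U).card :=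
      Finset.card_le_card (Finset.sdiff_subset_sdiff hWV (Finset.Subset.refl _))
    have e1 : (U \ V).card + (U ∩ V).card = U.card := Finset.card_sdiff_add_card_inter _ _
    have e2 : (V \ U).card + (V ∩ U).card = V.card := Finset.card_sdiff_add_card_inter _ _
    have e3 : (U ∩ V).card = (V ∩ U).card := by rw [Finset.inter_comm]
    omega
end

section
/- Two vertices e_{B_1} and e_{B_2} of a matroid polytope P(M) are adjacent (joined by an edge) if and only if e_{B_1} - e_{B_2} = e_i - e_j for some indices i and j, i.e., the bases B_1 and B_2 differ by a single element exchange. -/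
section helpers

open Set

lemma indOne_inj {n : ℕ} {A B : Set (Fin n)}
    (h : A.indicator (fun _ => (1 : ℝ)) = B.indicator (fun _ => (1 : ℝ))) : A = B := by
  classical
  ext k
  have hk := congrFun h k
  simp only [Set.indicator_apply] at hk
  by_cases h1 : k ∈ A <;> by_cases h2 : k ∈ B <;> simp [h1, h2] at hk ⊢

lemma sum_indOne {n : ℕ} (C : Set (Fin n)) :
    ∑ k, C.indicator (fun _ => (1 : ℝ)) k = C.ncard := by
  classical
  simp only [Set.indicator_apply]
  rw [Finset.sum_boole, Set.ncard_eq_toFinset_card C (Set.toFinite C)]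
  norm_cast
  congr 1
  ext k
  simp [Set.Finite.mem_toFinset]

lemma sum_indOne_mul {n : ℕ} (A B : Set (Fin n)) :
    ∑ k, A.indicator (fun _ => (1 : ℝ)) k * B.indicator (fun _ => (1 : ℝ)) k
      = (A ∩ B).ncard := by
  classical
  rw [← sum_indOne (A ∩ B)]
  apply Finset.sum_congr rfl
  intro k _
  simp only [Set.indicator_apply]
  by_cases h1 : k ∈ A <;> by_cases h2 : k ∈ B <;> simp [h1, h2]

end helpers



open Set

lemma symExch {n : ℕ} {M : Matroid (Fin n)} (hE : M.E = Set.univ) {B₁ B₂ : Set (Fin n)} {e : Fin n}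
    (h1 : M.IsBase B₁) (h2 : M.IsBase B₂) (he : e ∈ B₁ \ B₂) :
    ∃ f ∈ B₂ \ B₁, M.IsBase (insert f (B₁ \ {e})) ∧ M.IsBase (insert e (B₂ \ {f})) := by
  classical
  have heE : e ∈ M.E := by rw [hE]; trivial
  have hecl : e ∈ M.closure B₂ := by rw [h2.closure_eq]; exact heE
  -- minimal I ⊆ B₂ with e ∈ closure I
  set 𝒮 : Set (Set (Fin n)) := {I | I ⊆ B₂ ∧ e ∈ M.closure I} with h𝒮
  have hfin : 𝒮.Finite := (B₂.toFinite.finite_subsets).subset (fun I hI => hI.1)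
  obtain ⟨I, hI, hImin⟩ : ∃ I ∈ 𝒮, ∀ I' ∈ 𝒮, id I' ≤ id I → id I = id I' := by
    obtain ⟨I, hI⟩ := hfin.exists_minimal ⟨B₂, Subset.rfl, hecl⟩
    exact ⟨I, hI.prop, fun I' hI' h => (hI.eq_of_le hI' h).symm⟩
  simp only [id] at hImin
  -- key: for f ∈ I, e ∉ closure (B₂ \ {f})
  have hkey : ∀ f ∈ I, e ∉ M.closure (B₂ \ {f}) := by
    intro f hf hecl'
    have hnot : e ∉ M.closure (I \ {f}) := by
      intro h
      have := hImin (I \ {f}) ⟨(diff_subset).trans hI.1, h⟩ diff_subset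
      exact (this ▸ hf : f ∈ I \ {f}).2 rfl
    have hx : e ∈ M.closure (insert f (I \ {f})) \ M.closure (I \ {f}) := by
      rw [Set.insert_diff_singleton, Set.insert_eq_self.2 hf]
      exact ⟨hI.2, hnot⟩
    have hfcl : f ∈ M.closure (insert e (I \ {f})) := (Matroid.closure_exchange hx).1
    have : f ∈ M.closure (B₂ \ {f}) := by
      have : M.closure (insert e (I \ {f})) ⊆ M.closure (insert e (B₂ \ {f})) :=
        M.closure_subset_closure (insert_subset_insert (diff_subset_diff_left hI.1))
      have h2' := Matroid.closure_insert_eq_of_mem_closure hecl'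
      exact h2' ▸ this hfcl
    exact h2.indep.notMem_closure_diff_of_mem (hI.1 hf) this
  -- find f ∈ I not in closure (B₁ \ {e})
  have hmain : ∃ f ∈ I, f ∉ M.closure (B₁ \ {e}) := by
    by_contra hcon
    push_neg at hcon
    have hsub : I ⊆ M.closure (B₁ \ {e}) := hcon
    have : e ∈ M.closure (B₁ \ {e}) :=
      Matroid.closure_subset_closure_of_subset_closure hsub hI.2
    exact h1.indep.notMem_closure_diff_of_mem he.1 this
  obtain ⟨f, hfI, hfcl⟩ := hmain
  have hfB₂ : f ∈ B₂ := hI.1 hfI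
  have hfe : f ≠ e := fun h => he.2 (h ▸ hfB₂)
  have hfB₁ : f ∉ B₁ := by
    intro h
    exact hfcl (M.subset_closure (B₁ \ {e}) (by rw [hE]; exact subset_univ _) ⟨h, hfe⟩)
  have hfE : f ∈ M.E := by rw [hE]; trivial
  -- B₃ := insert f (B₁ \ {e}) is a base
  have hind3 : M.Indep (insert f (B₁ \ {e})) := by
    have hd : M.Indep (B₁ \ {e}) := h1.indep.subset diff_subset
    rw [hd.insert_indep_iff_of_notMem (fun h => hfB₁ h.1)]
    exact ⟨hfE, hfcl⟩
  have hB₃ : M.IsBase (insert f (B₁ \ {e})) := by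
    have := h1.exchange_isBase_of_indep' he.1 hfB₁ (by
      rwa [← Set.insert_diff_singleton_comm hfe])
    rwa [← Set.insert_diff_singleton_comm hfe] at this
  -- B₄ := insert e (B₂ \ {f}) is a base
  have hecl4 : e ∉ M.closure (B₂ \ {f}) := hkey f hfI
  have hind4 : M.Indep (insert e (B₂ \ {f})) := by
    have hd : M.Indep (B₂ \ {f}) := h2.indep.subset diff_subset
    rw [hd.insert_indep_iff_of_notMem (fun h => he.2 h.1)]
    exact ⟨heE, hecl4⟩
  have hB₄ : M.IsBase (insert e (B₂ \ {f})) := by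
    have := h2.exchange_isBase_of_indep' hfB₂ he.2 (by
      rwa [← Set.insert_diff_singleton_comm (Ne.symm hfe)])
    rwa [← Set.insert_diff_singleton_comm (Ne.symm hfe)] at this
  exact ⟨f, ⟨hfB₂, hfB₁⟩, hB₃, hB₄⟩

lemma diff_single_of_exchange {n : ℕ} (B₁ B₂ : Set (Fin n)) (e f : Fin n)
    (heB₁ : e ∈ B₁) (heB₂ : e ∉ B₂) (hfB₂ : f ∈ B₂) (hfB₁ : f ∉ B₁) (hfe : f ≠ e)
    (hB₂eq : B₂ = insert f B₁ \ {e}) :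
    B₁.indicator (fun _ => (1:ℝ)) - B₂.indicator (fun _ => (1:ℝ))
      = Pi.single e 1 - Pi.single f 1 := by
  classical
  funext k
  simp only [Pi.sub_apply, Set.indicator_apply, Pi.single_apply, hB₂eq,
    Set.mem_diff, Set.mem_insert_iff, Set.mem_singleton_iff]
  by_cases hk1 : k = e <;> by_cases hk2 : k = f <;> by_cases hk3 : k ∈ B₁ <;>
    simp [hk1, hk2, hk3, hfe, Ne.symm hfe] <;> simp_all


lemma indOne_add_exchange {n : ℕ} (B₁ B₂ : Set (Fin n)) (e f : Fin n)
    (heB₁ : e ∈ B₁) (heB₂ : e ∉ B₂) (hfB₂ : f ∈ B₂) (hfB₁ : f ∉ B₁) (hfe : f ≠ e) :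
    B₁.indicator (fun _ => (1:ℝ)) + B₂.indicator (fun _ => (1:ℝ))
      = (insert f (B₁ \ {e})).indicator (fun _ => (1:ℝ))
        + (insert e (B₂ \ {f})).indicator (fun _ => (1:ℝ)) := by
  classical
  funext k
  simp only [Pi.add_apply, Set.indicator_apply,
    Set.mem_diff, Set.mem_insert_iff, Set.mem_singleton_iff]
  by_cases hk1 : k = e <;> by_cases hk2 : k = f <;>
    by_cases hk3 : k ∈ B₁ <;> by_cases hk4 : k ∈ B₂ <;>
    simp [hk1, hk2, hk3, hk4, hfe, Ne.symm hfe] <;> simp_all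


/-- Edmonds; Gelfand–Goresky–MacPherson–Serganova: in the matroid polytope
`P(M) = conv{e_B : B a base of M} ⊆ ℝⁿ`, the vertices `e_{B₁}` and `e_{B₂}` (for distinct
bases `B₁ ≠ B₂`) are adjacent — i.e. the segment `[e_{B₁}, e_{B₂}]` is a face of `P(M)` —
iff `e_{B₁} - e_{B₂} = e_i - e_j` for some `i, j`. -/
theorem stmt6 {n : ℕ} (M : Matroid (Fin n)) (hE : M.E = Set.univ)
    (B₁ B₂ : Set (Fin n)) (h1 : M.IsBase B₁) (h2 : M.IsBase B₂) (hne : B₁ ≠ B₂) :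
    IsExtreme ℝ
      (convexHull ℝ {x : Fin n → ℝ | ∃ B, M.IsBase B ∧ x = B.indicator (fun _ => (1 : ℝ))})
      (segment ℝ (B₁.indicator fun _ => (1 : ℝ)) (B₂.indicator fun _ => (1 : ℝ)))
    ↔ ∃ i j : Fin n,
        B₁.indicator (fun _ => (1 : ℝ)) - B₂.indicator (fun _ => (1 : ℝ))
          = Pi.single i 1 - Pi.single j 1 := by
  classical
  set v₁ : Fin n → ℝ := B₁.indicator (fun _ => (1 : ℝ)) with hv₁
  set v₂ : Fin n → ℝ := B₂.indicator (fun _ => (1 : ℝ)) with hv₂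
  set S : Set (Fin n → ℝ) :=
    {x : Fin n → ℝ | ∃ B, M.IsBase B ∧ x = B.indicator (fun _ => (1 : ℝ))} with hS
  constructor
  · intro hext
    by_contra hcon
    push_neg at hcon
    -- B₁ \ B₂ is nonempty
    have hss : ¬ B₁ ⊆ B₂ := fun h => hne (h1.eq_of_subset_isBase h2 h)
    obtain ⟨e, heB₁, heB₂⟩ := Set.not_subset.1 hss
    -- B₁ \ B₂ has at least two elements, else we contradict hcon
    have hbig : ∃ e' ∈ B₁ \ B₂, e' ≠ e := by
      by_contra h'
      push_neg at h'
      have hsing : B₁ \ B₂ = {e} :=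
        subset_antisymm (fun x hx => h' x hx) (by simp [heB₁, heB₂])
      obtain ⟨f, hf, hB₂eq⟩ := h1.eq_exchange_of_diff_eq_singleton h2 hsing
      apply hcon e f
      have hfe : f ≠ e := by rintro rfl; exact hf.2 heB₁
      exact diff_single_of_exchange B₁ B₂ e f heB₁ heB₂ hf.1 hf.2 hfe hB₂eq
    obtain ⟨e', he', hee⟩ := hbig
    obtain ⟨f, hf, hB₃, hB₄⟩ := symExch hE h1 h2 ⟨heB₁, heB₂⟩
    set v₃ : Fin n → ℝ := (insert f (B₁ \ {e})).indicator (fun _ => (1 : ℝ)) with hv₃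
    set v₄ : Fin n → ℝ := (insert e (B₂ \ {f})).indicator (fun _ => (1 : ℝ)) with hv₄
    have hfe : f ≠ e := by rintro rfl; exact hf.2 heB₁
    have hsum : v₁ + v₂ = v₃ + v₄ :=
      indOne_add_exchange B₁ B₂ e f heB₁ heB₂ hf.1 hf.2 hfe
    have hm₁ : (1/2 : ℝ) • v₁ + (1/2 : ℝ) • v₂ ∈ segment ℝ v₁ v₂ :=
      ⟨1/2, 1/2, by norm_num, by norm_num, by norm_num, rfl⟩
    have hm₂ : (1/2 : ℝ) • v₁ + (1/2 : ℝ) • v₂ ∈ openSegment ℝ v₃ v₄ := by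
      refine ⟨1/2, 1/2, by norm_num, by norm_num, by norm_num, ?_⟩
      rw [← smul_add, ← smul_add, hsum]
    have hv₃S : v₃ ∈ convexHull ℝ S :=
      subset_convexHull ℝ S ⟨_, hB₃, rfl⟩
    have hv₄S : v₄ ∈ convexHull ℝ S :=
      subset_convexHull ℝ S ⟨_, hB₄, rfl⟩
    have hv₃seg : v₃ ∈ segment ℝ v₁ v₂ := hext.2 hv₃S hv₄S hm₁ hm₂
    -- evaluate at e' to get a contradiction
    obtain ⟨a, b, ha, hb, hab, heq⟩ := hv₃seg
    have he'B₃ : e' ∈ insert f (B₁ \ {e}) := Or.inr ⟨he'.1, hee⟩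
    have heval := congrFun heq e'
    simp only [Pi.add_apply, Pi.smul_apply, smul_eq_mul, hv₁, hv₂, hv₃,
      Set.indicator_apply, if_pos he'.1, if_neg he'.2, if_pos he'B₃] at heval
    have hb0 : b = 0 := by linarith [heval, hab]
    have ha1 : a = 1 := by linarith
    have hveq : v₃ = v₁ := by
      rw [← heq, ha1, hb0]
      simp
    have : insert f (B₁ \ {e}) = B₁ := indOne_inj (by rw [← hv₃, ← hv₁, hveq])
    exact hf.2 (this ▸ (Set.mem_insert f _))
  · rintro ⟨i, j, hij⟩
    -- basic combinatorics of i, j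
    have hij' : ∀ k, v₁ k - v₂ k = (Pi.single i 1 : Fin n → ℝ) k - (Pi.single j 1 : Fin n → ℝ) k :=
      fun k => by simpa [Pi.sub_apply] using congrFun hij k
    have hne' : i ≠ j := by
      rintro rfl
      apply hne
      apply indOne_inj
      have : v₁ - v₂ = 0 := by rw [hij]; ring
      have h0 : v₁ = v₂ := by
        funext k; have := congrFun this k; simpa [sub_eq_zero] using this
      exact h0
    have hiB : i ∈ B₁ ∧ i ∉ B₂ := by
      have := hij' i
      simp only [Pi.single_apply, if_pos rfl, if_neg hne'.symm, hv₁, hv₂,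
        Set.indicator_apply] at this
      by_cases h1' : i ∈ B₁ <;> by_cases h2' : i ∈ B₂ <;>
        simp [h1', h2', hne'] at this ⊢ <;> try norm_num at this
    have hjB : j ∈ B₂ ∧ j ∉ B₁ := by
      have := hij' j
      simp only [Pi.single_apply, if_pos rfl, if_neg hne', hv₁, hv₂,
        Set.indicator_apply] at this
      by_cases h1' : j ∈ B₁ <;> by_cases h2' : j ∈ B₂ <;>
        simp [h1', h2', hne'.symm] at this ⊢ <;> try norm_num at this
    have hother : ∀ k, k ≠ i → k ≠ j → (k ∈ B₁ ↔ k ∈ B₂) := by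
      intro k hki hkj
      have := hij' k
      simp only [Pi.single_apply, if_neg (Ne.symm hki), if_neg (Ne.symm hkj), hv₁, hv₂,
        Set.indicator_apply, sub_zero] at this
      by_cases h1' : k ∈ B₁ <;> by_cases h2' : k ∈ B₂ <;>
        simp [h1', h2', hki, hkj] at this ⊢ <;> try norm_num at this
    -- cardinalities
    set s : ℕ := (B₁ ∩ B₂).ncard with hs
    have hB₁eq : B₁ = insert i (B₁ ∩ B₂) := by
      ext k
      constructor
      · intro hk
        by_cases hki : k = i
        · exact Or.inl hki
        · refine Or.inr ⟨hk, ?_⟩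
          rcases eq_or_ne k j with rfl | hkj
          · exact absurd hk hjB.2
          · exact (hother k hki hkj).1 hk
      · rintro (rfl | hk)
        · exact hiB.1
        · exact hk.1
    have hrs : B₁.ncard = s + 1 := by
      rw [hB₁eq, Set.ncard_insert_of_notMem (fun h => hiB.2 h.2) (Set.toFinite _)]
    have hr2 : B₂.ncard = s + 1 := by rw [← h1.ncard_eq_ncard_of_isBase h2, hrs]
    -- the combinatorial bound
    have hval : ∀ B, M.IsBase B → B ≠ B₁ → B ≠ B₂ →
        (B₁ ∩ B).ncard + (B₂ ∩ B).ncard < 2 * s + 1 := by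
      intro B hB hne1 hne2
      have hBr : B.ncard = s + 1 := by rw [hB.ncard_eq_ncard_of_isBase h1, hrs]
      have key : ∀ A : Set (Fin n), M.IsBase A → B ≠ A → (A ∩ B).ncard < s + 1 := by
        intro A hA hBA
        have hle : (A ∩ B).ncard ≤ B.ncard :=
          Set.ncard_le_ncard Set.inter_subset_right (Set.toFinite _)
        rw [hBr] at hle
        rcases lt_or_eq_of_le hle with h | h
        · exact h
        · exfalso
          have : A ∩ B = B := by
            apply Set.eq_of_subset_of_ncard_le Set.inter_subset_right _ (Set.toFinite _)
            rw [hBr, h]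
          have hsub : B ⊆ A := by rw [← this]; exact Set.inter_subset_left
          exact hBA (hB.eq_of_subset_isBase hA hsub)
      have k1 := key B₁ h1 hne1
      have k2 := key B₂ h2 hne2
      omega
    -- the linear functional
    set c : Fin n → ℝ := fun k => v₁ k + v₂ k with hc
    set L : (Fin n → ℝ) →ₗ[ℝ] ℝ :=
      { toFun := fun x => ∑ k, c k * x k,
        map_add' := by
          intro x y
          simp [mul_add, Finset.sum_add_distrib]
        map_smul' := by
          intro r x
          simp only [Pi.smul_apply, smul_eq_mul, RingHom.id_apply, Finset.mul_sum]
          exact Finset.sum_congr rfl fun k _ => by ring } with hL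
    have hLval : ∀ B : Set (Fin n),
        L (B.indicator (fun _ => (1:ℝ))) = ((B₁ ∩ B).ncard + (B₂ ∩ B).ncard : ℕ) := by
      intro B
      show (∑ k, c k * B.indicator (fun _ => (1:ℝ)) k) = _
      simp only [hc, add_mul, Finset.sum_add_distrib, hv₁, hv₂]
      rw [sum_indOne_mul, sum_indOne_mul]
      push_cast
      ring
    set c₀ : ℝ := ((2 * s + 1 : ℕ) : ℝ) with hc₀
    have hLv₁ : L v₁ = c₀ := by
      rw [hv₁, hLval B₁, Set.inter_self, Set.inter_comm B₂ B₁, ← hs, hrs, hc₀]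
      push_cast
      ring
    have hLv₂ : L v₂ = c₀ := by
      rw [hv₂, hLval B₂, Set.inter_self, ← hs, hr2, hc₀]
      push_cast
      ring
    have hSle : ∀ x ∈ S, L x ≤ c₀ ∧ (L x = c₀ → x = v₁ ∨ x = v₂) := by
      rintro x ⟨B, hB, rfl⟩
      by_cases hB1 : B = B₁
      · subst hB1; exact ⟨le_of_eq hLv₁, fun _ => Or.inl rfl⟩
      by_cases hB2 : B = B₂
      · subst hB2; exact ⟨le_of_eq hLv₂, fun _ => Or.inr rfl⟩
      have hlt := hval B hB hB1 hB2
      rw [hLval B]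
      constructor
      · rw [hc₀]; exact_mod_cast le_of_lt hlt
      · intro h
        exfalso
        rw [hc₀] at h
        have : (B₁ ∩ B).ncard + (B₂ ∩ B).ncard = 2 * s + 1 := by exact_mod_cast h
        omega
    -- conv hull bound
    have hconv : ∀ x ∈ convexHull ℝ S, L x ≤ c₀ ∧ (L x = c₀ → x ∈ segment ℝ v₁ v₂) := by
      intro x hx
      rw [convexHull_eq] at hx
      obtain ⟨ι, t, w, z, hw0, hw1, hz, hxeq⟩ := hx
      rw [Finset.centerMass_eq_of_sum_1 _ _ hw1] at hxeq
      have hLx : L x = ∑ k ∈ t, w k * L (z k) := by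
        rw [← hxeq, map_sum]
        exact Finset.sum_congr rfl fun k _ => by rw [map_smul, smul_eq_mul]
      have hterm : ∀ k ∈ t, w k * L (z k) ≤ w k * c₀ := fun k hk =>
        mul_le_mul_of_nonneg_left ((hSle (z k) (hz k hk)).1) (hw0 k hk)
      have hle : L x ≤ c₀ := by
        rw [hLx]
        calc ∑ k ∈ t, w k * L (z k) ≤ ∑ k ∈ t, w k * c₀ := Finset.sum_le_sum hterm
        _ = c₀ := by rw [← Finset.sum_mul, hw1, one_mul]
      refine ⟨hle, fun heq => ?_⟩
      -- all nonzero weights sit on v₁, v₂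
      have hzero : ∀ k ∈ t, w k * (c₀ - L (z k)) = 0 := by
        have hsum0 : ∑ k ∈ t, w k * (c₀ - L (z k)) = 0 := by
          have : ∑ k ∈ t, w k * (c₀ - L (z k))
              = (∑ k ∈ t, w k * c₀) - ∑ k ∈ t, w k * L (z k) := by
            rw [← Finset.sum_sub_distrib]
            exact Finset.sum_congr rfl fun k _ => by ring
          rw [this, ← Finset.sum_mul, hw1, one_mul, ← hLx, heq, sub_self]
        exact (Finset.sum_eq_zero_iff_of_nonneg (fun k hk =>
          mul_nonneg (hw0 k hk) (sub_nonneg.2 (hSle (z k) (hz k hk)).1))).1 hsum0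
      have hmem : ∀ k ∈ t.filter (fun k => w k ≠ 0), z k ∈ ({v₁, v₂} : Set (Fin n → ℝ)) := by
        intro k hk
        rw [Finset.mem_filter] at hk
        have h0 := hzero k hk.1
        rcases mul_eq_zero.1 h0 with h | h
        · exact absurd h hk.2
        · have := (hSle (z k) (hz k hk.1)).2 (by linarith [sub_eq_zero.1 h])
          rcases this with h' | h' <;> simp [h']
      rw [← convexHull_pair]
      rw [← hxeq, ← Finset.centerMass_eq_of_sum_1 _ _ hw1, ← Finset.centerMass_filter_ne_zero]
      apply Finset.centerMass_mem_convexHull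
      · intro k hk; exact hw0 k (Finset.mem_filter.1 hk).1
      · rw [Finset.sum_filter_ne_zero]; rw [hw1]; norm_num
      · exact hmem
    -- now prove extremeness
    constructor
    · rw [← convexHull_pair]
      apply convexHull_mono
      rintro x (rfl | rfl)
      · exact ⟨B₁, h1, rfl⟩
      · exact ⟨B₂, h2, by simpa using hv₂⟩
    · intro x hx y hy z hz hzo
      have hLz : L z = c₀ := by
        obtain ⟨a, b, ha, hb, hab, rfl⟩ := hz
        rw [map_add, map_smul, map_smul, smul_eq_mul, smul_eq_mul, hLv₁, hLv₂,
          ← add_mul, hab, one_mul]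
      obtain ⟨a, b, ha, hb, hab, heq⟩ := hzo
      have hLxy : a * L x + b * L y = c₀ := by
        rw [← hLz, ← heq, map_add, map_smul, map_smul, smul_eq_mul, smul_eq_mul]
      have hlx := (hconv x hx).1
      have hly := (hconv y hy).1
      have hcc : a * c₀ + b * c₀ = c₀ := by rw [← add_mul, hab, one_mul]
      have hLxeq : L x = c₀ := by
        by_contra hne''
        have hlt : L x < c₀ := lt_of_le_of_ne hlx hne''
        have p1 : a * L x < a * c₀ := mul_lt_mul_of_pos_left hlt ha
        have p2 : b * L y ≤ b * c₀ := mul_le_mul_of_nonneg_left hly hb.le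
        linarith
      have hLyeq : L y = c₀ := by
        by_contra hne''
        have hlt : L y < c₀ := lt_of_le_of_ne hly hne''
        have p1 : b * L y < b * c₀ := mul_lt_mul_of_pos_left hlt hb
        have p2 : a * L x ≤ a * c₀ := mul_le_mul_of_nonneg_left hlx ha.le
        linarith
      exact (hconv x hx).2 hLxeq
end

section
/- The dimension of the matroid polytope P(M) of a matroid M on ground set of size n equals n - c(M), where c(M) is the number of connected components of M. -/
open Set

namespace Stmt7Aux


variable {n : ℕ} {M : Matroid (Fin n)}

/-- every dependent set contains a circuit (minimal dependent set). -/
lemma exists_circ (M : Matroid (Fin n)) (D : Set (Fin n)) (hD : ¬ M.Indep D) :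
    ∃ C, C ⊆ D ∧ (¬ M.Indep C ∧ ∀ D' ⊂ C, M.Indep D') := by
  obtain h | h := em (∀ D' ⊂ D, M.Indep D')
  · exact ⟨D, subset_rfl, hD, h⟩
  · push_neg at h
    obtain ⟨D', hss, hdep⟩ := h
    have hlt : D'.ncard < D.ncard := Set.ncard_lt_ncard hss (toFinite D)
    obtain ⟨C, h1, h2⟩ := exists_circ M D' hdep
    exact ⟨C, h1.trans hss.subset, h2⟩
termination_by D.ncard

/-- weak circuit elimination, dependence form. -/
lemma union_diff_dep (hE : M.E = Set.univ) {C₁ C₂ : Set (Fin n)}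
    (h₁ : ¬ M.Indep C₁ ∧ ∀ D ⊂ C₁, M.Indep D)
    (h₂ : ¬ M.Indep C₂ ∧ ∀ D ⊂ C₂, M.Indep D)
    (hne : C₁ ≠ C₂) {e : Fin n} (he₁ : e ∈ C₁) (he₂ : e ∈ C₂) :
    ¬ M.Indep ((C₁ ∪ C₂) \ {e}) := by
  intro hX
  have hC2C1 : ¬ C₂ ⊆ C₁ := fun hsub =>
    h₂.1 (h₁.2 _ (hsub.ssubset_of_ne (Ne.symm hne)))
  obtain ⟨f, hf₂, hf₁⟩ := not_subset.1 hC2C1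
  have hfe : f ≠ e := fun h => hf₁ (h ▸ he₁)
  have hI0 : M.Indep (C₂ \ {f}) :=
    h₂.2 _ (Set.sdiff_singleton_ssubset.2 hf₂)
  obtain ⟨I, hI, hI0I⟩ := hI0.subset_isBasis_of_subset
    (diff_subset.trans subset_union_right) (by simp [hE])
  have hfI : f ∉ I := by
    intro hfI
    refine h₂.1 (hI.indep.subset fun x hx => ?_)
    by_cases hxf : x = f
    · exact hxf ▸ hfI
    · exact hI0I ⟨hx, hxf⟩
  obtain ⟨g, hg₁, hgI⟩ := not_subset.1
    (show ¬ C₁ ⊆ I from fun hs => h₁.1 (hI.indep.subset hs))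
  have hgf : g ≠ f := fun h => hf₁ (h ▸ hg₁)
  -- cardinality bound
  have hIsub : I ⊆ ((C₁ ∪ C₂) \ {f}) \ {g} := fun x hx =>
    ⟨⟨hI.subset hx, fun h => hfI (mem_singleton_iff.1 h ▸ hx)⟩,
      fun h => hgI (mem_singleton_iff.1 h ▸ hx)⟩
  have h1 : ((C₁ ∪ C₂) \ {e}).encard + 1 = (C₁ ∪ C₂).encard :=
    Set.encard_diff_singleton_add_one (mem_union_left _ he₁)
  have h2 : (((C₁ ∪ C₂) \ {f}) \ {g}).encard + 1 = ((C₁ ∪ C₂) \ {f}).encard :=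
    Set.encard_diff_singleton_add_one ⟨mem_union_left _ hg₁, hgf⟩
  have h3 : ((C₁ ∪ C₂) \ {f}).encard + 1 = (C₁ ∪ C₂).encard :=
    Set.encard_diff_singleton_add_one (mem_union_right _ hf₂)
  have hle : I.encard + 1 + 1 ≤ ((C₁ ∪ C₂) \ {e}).encard + 1 := by
    calc I.encard + 1 + 1 ≤ (((C₁ ∪ C₂) \ {f}) \ {g}).encard + 1 + 1 := by
          gcongr
      _ = (C₁ ∪ C₂).encard := by rw [h2, h3]
      _ = ((C₁ ∪ C₂) \ {e}).encard + 1 := h1.symm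
  have hlt : I.encard < ((C₁ ∪ C₂) \ {e}).encard := by
    have h4 : I.encard + 1 ≤ ((C₁ ∪ C₂) \ {e}).encard :=
      (WithTop.add_le_add_iff_right (by simp : (1:ℕ∞) ≠ ⊤)).1 hle
    exact (ENat.add_one_le_iff (Set.encard_ne_top_iff.2 (toFinite I))).1 h4
  obtain ⟨x, hx, hxI⟩ := hI.indep.augment hX hlt
  exact (hI.insert_dep ⟨(hx.1).1, hx.2⟩).not_indep hxI



variable {n : ℕ} {M : Matroid (Fin n)}



/-- the basic unit vector -/
def ee (i : Fin n) : Fin n → ℝ := fun k => if k = i then 1 else 0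

lemma indicator_insert_diff {B : Set (Fin n)} {i j : Fin n}
    (hi : i ∈ B) (hj : j ∉ B) (hij : i ≠ j) :
    B.indicator (fun _ => (1:ℝ)) - (insert j (B \ {i})).indicator (fun _ => 1)
      = ee i - ee j := by
  funext k
  simp only [Pi.sub_apply, ee, Set.indicator_apply, Set.mem_insert_iff, Set.mem_diff,
    Set.mem_singleton_iff]
  by_cases hki : k = i
  · subst hki; simp [hi, hij, hij.symm]
  · by_cases hkj : k = j
    · subst hkj; simp [hj, hki, Ne.symm hki]
    · by_cases hkB : k ∈ B <;> simp [hki, hkj, hkB]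

/-- from a base exchange, get a circuit containing the two exchanged elements. -/
lemma exchange_rel (hE : M.E = Set.univ) {B B' : Set (Fin n)} (hB : M.IsBase B)
    (hB' : M.IsBase B') {i j : Fin n} (hi : i ∈ B \ B') (hj : j ∈ B' \ B)
    (hB'' : M.IsBase (insert j (B \ {i}))) :
    ∃ C, (¬ M.Indep C ∧ ∀ D ⊂ C, M.Indep D) ∧ i ∈ C ∧ j ∈ C := by
  have hdep : ¬ M.Indep (insert j B) := (hB.insert_dep (by simp [hE, hj.2])).not_indep
  obtain ⟨C, hCsub, hC⟩ := exists_circ M _ hdep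
  have hjC : j ∈ C := by
    by_contra hjC
    exact hC.1 (hB.indep.subset fun x hx =>
      ((hCsub hx).resolve_left fun h => hjC (h ▸ hx)))
  have hiC : i ∈ C := by
    by_contra hiC
    refine hC.1 (hB''.indep.subset fun x hx => ?_)
    rcases hCsub hx with rfl | hxB
    · exact mem_insert _ _
    · exact mem_insert_of_mem _ ⟨hxB, fun h => hiC (h ▸ hx)⟩
  exact ⟨C, hC, hiC, hjC⟩

/-- conversely, a circuit through `i ≠ j` yields a pair of bases differing by that exchange. -/
lemma circ_pair (hE : M.E = Set.univ) {i j : Fin n} {C : Set (Fin n)}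
    (hC : ¬ M.Indep C ∧ ∀ D ⊂ C, M.Indep D) (hiC : i ∈ C) (hjC : j ∈ C) (hij : i ≠ j) :
    ∃ B, M.IsBase B ∧ i ∉ B ∧ j ∈ B ∧ M.IsBase (insert i (B \ {j})) := by
  have hCi : M.Indep (C \ {i}) := hC.2 _ (Set.sdiff_singleton_ssubset.2 hiC)
  obtain ⟨B, hB, hCB⟩ := hCi.exists_isBase_superset
  have hiB : i ∉ B := by
    intro hiB
    refine hC.1 (hB.indep.subset fun x hx => ?_)
    by_cases hxi : x = i
    · exact hxi ▸ hiB
    · exact hCB ⟨hx, hxi⟩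
  have hjB : j ∈ B := hCB ⟨hjC, Ne.symm hij⟩
  have hindep : M.Indep (insert i (B \ {j})) := by
    by_contra hdep
    obtain ⟨C'', hC''sub, hC''⟩ := exists_circ M _ hdep
    have hiC'' : i ∈ C'' := by
      by_contra hiC''
      exact hC''.1 (hB.indep.subset fun x hx =>
        (((hC''sub hx).resolve_left fun h => hiC'' (h ▸ hx)).1))
    have hjC'' : j ∉ C'' := fun hjC'' => by
      rcases hC''sub hjC'' with h | h
      · exact hij h.symm
      · exact h.2 rfl
    have hne : C ≠ C'' := fun h => hjC'' (h ▸ hjC)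
    refine union_diff_dep hE hC hC'' hne hiC hiC'' ?_
    refine hB.indep.subset fun x hx => ?_
    obtain ⟨hx1, hxi⟩ := hx
    have hxi' : x ≠ i := hxi
    rcases hx1 with h | h
    · exact hCB ⟨h, hxi'⟩
    · exact ((hC''sub h).resolve_left hxi').1
  exact ⟨B, hB, hiB, hjB, hB.exchange_isBase_of_indep hiB hindep⟩



variable {n : ℕ}





/-- differences of base indicator vectors lie in the span of circuit-pair edge vectors. -/
lemma diff_mem (M : Matroid (Fin n)) (hE : M.E = Set.univ) (U : Submodule ℝ (Fin n → ℝ))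
    (hU : ∀ i j : Fin n,
      (∃ C, (¬ M.Indep C ∧ ∀ D ⊂ C, M.Indep D) ∧ i ∈ C ∧ j ∈ C) → ee i - ee j ∈ U)
    (B B' : Set (Fin n)) (hB : M.IsBase B) (hB' : M.IsBase B') :
    (B.indicator (fun _ => (1:ℝ)) - B'.indicator fun _ => (1:ℝ)) ∈ U := by
  by_cases hss : B ⊆ B'
  · rw [hB.eq_of_subset_isBase hB' hss]
    simp
  · obtain ⟨i, hiB, hiB'⟩ := not_subset.1 hss
    obtain ⟨j, hj, hB''⟩ := hB.exchange hB' ⟨hiB, hiB'⟩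
    have hij : i ≠ j := fun h => hj.2 (h ▸ hiB)
    have hgen : ee i - ee j ∈ U := hU i j (exchange_rel hE hB hB' ⟨hiB, hiB'⟩ hj hB'')
    have hkey : B.indicator (fun _ => (1:ℝ)) - (insert j (B \ {i})).indicator (fun _ => 1)
        = ee i - ee j := indicator_insert_diff hiB hj.2 hij
    have hcard : ((insert j (B \ {i})) \ B').ncard < (B \ B').ncard := by
      have heq : (insert j (B \ {i})) \ B' = (B \ B') \ {i} := by
        ext x
        simp only [Set.mem_diff, Set.mem_insert_iff, Set.mem_singleton_iff]
        constructor
        · rintro ⟨rfl | ⟨hxB, hxi⟩, hxB'⟩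
          · exact absurd hj.1 hxB'
          · exact ⟨⟨hxB, hxB'⟩, hxi⟩
        · rintro ⟨⟨hxB, hxB'⟩, hxi⟩
          exact ⟨Or.inr ⟨hxB, hxi⟩, hxB'⟩
      rw [heq]
      exact Set.ncard_diff_singleton_lt_of_mem ⟨hiB, hiB'⟩ (toFinite _)
    have hrec := diff_mem M hE U hU (insert j (B \ {i})) B' hB'' hB'
    have hgen' : B.indicator (fun _ => (1:ℝ))
        - (insert j (B \ {i})).indicator (fun _ => 1) ∈ U := by rw [hkey]; exact hgen
    have := U.add_mem hgen' hrec
    rwa [sub_add_sub_cancel] at this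
termination_by (B \ B').ncard
decreasing_by exact hcard






open Classical in
noncomputable def phi (S : Setoid (Fin n)) : (Fin n → ℝ) →ₗ[ℝ] (Quotient S → ℝ) where
  toFun x := fun c => ∑ i : Fin n, if Quotient.mk S i = c then x i else 0
  map_add' x y := by
    funext c
    show (∑ i : Fin n, if Quotient.mk S i = c then (x + y) i else 0)
      = (∑ i : Fin n, if Quotient.mk S i = c then x i else 0)
        + ∑ i : Fin n, if Quotient.mk S i = c then y i else 0
    rw [← Finset.sum_add_distrib]
    exact Finset.sum_congr rfl fun i _ => by split <;> simp
  map_smul' r x := by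
    funext c
    show (∑ i : Fin n, if Quotient.mk S i = c then (r • x) i else 0)
      = r • ∑ i : Fin n, if Quotient.mk S i = c then x i else 0
    simp only [Pi.smul_apply, smul_eq_mul, Finset.mul_sum]
    exact Finset.sum_congr rfl fun i _ => by split <;> simp

open Classical in
lemma phi_apply (S : Setoid (Fin n)) (x : Fin n → ℝ) (c : Quotient S) :
    phi S x c = ∑ i : Fin n, if Quotient.mk S i = c then x i else 0 := rfl

lemma finrank_span_rel (S : Setoid (Fin n)) :
    Module.finrank ℝ (Submodule.span ℝ {x : Fin n → ℝ | ∃ i j, S.r i j ∧ x = ee i - ee j})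
      = n - Nat.card (Quotient S) := by
  classical
  haveI : Fintype (Quotient S) := Fintype.ofFinite _
  set U := Submodule.span ℝ {x : Fin n → ℝ | ∃ i j, S.r i j ∧ x = ee i - ee j} with hUdef
  -- φ of a unit vector
  have hφe : ∀ (i : Fin n) (c : Quotient S),
      phi S (ee i) c = if Quotient.mk S i = c then 1 else 0 := by
    intro i c
    rw [phi_apply]
    rw [Finset.sum_eq_single i]
    · simp [ee]
    · intro k _ hki
      simp [ee, hki]
    · simp
  -- U ≤ ker φ
  have hUker : U ≤ LinearMap.ker (phi S) := by
    rw [hUdef, Submodule.span_le]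
    rintro x ⟨i, j, hij, rfl⟩
    have hq : Quotient.mk S i = Quotient.mk S j := Quotient.sound hij
    rw [SetLike.mem_coe, LinearMap.mem_ker, map_sub]
    funext c
    simp [hφe, hq]
  -- ker φ ≤ U
  have hkerU : LinearMap.ker (phi S) ≤ U := by
    intro x hx
    rw [LinearMap.mem_ker] at hx
    have hx0 : ∀ c : Quotient S,
        (∑ i : Fin n, if Quotient.mk S i = c then x i else 0) = 0 := by
      intro c
      have := congrFun hx c
      rwa [phi_apply] at this
    set ρ : Fin n → Fin n := fun i => (Quotient.mk S i).out with hρdef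
    have hρ : ∀ i, Quotient.mk S (ρ i) = Quotient.mk S i := fun i => Quotient.out_eq _
    have hρρ : ∀ i, ρ (ρ i) = ρ i := fun i => by
      simp only [hρdef]
      rw [hρ i]
    -- x = ∑ i, x i • ee i
    have hbasis : x = ∑ i : Fin n, x i • ee i := by
      funext k
      rw [Finset.sum_apply]
      rw [Finset.sum_eq_single k]
      · simp [ee]
      · intro i _ hik
        simp [ee, Ne.symm hik]
      · simp
    -- the remainder term vanishes
    have hr : (∑ i : Fin n, x i • ee (ρ i)) = 0 := by
      funext k
      rw [Finset.sum_apply]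
      have hterm : ∀ i : Fin n, (x i • ee (ρ i)) k = if ρ i = k then x i else 0 := by
        intro i
        simp only [Pi.smul_apply, ee, smul_eq_mul]
        by_cases h : ρ i = k
        · subst h; simp
        · have h' : k ≠ ρ i := fun hh => h hh.symm
          simp [h, h']
      simp only [hterm]
      by_cases hk : ρ k = k
      · have hiff : ∀ i : Fin n, (ρ i = k) ↔ (Quotient.mk S i = Quotient.mk S k) := by
          intro i
          constructor
          · intro h
            rw [← hρ i, h]
          · intro h
            simp only [hρdef] at hk ⊢
            rw [h, hk]
        calc (∑ i : Fin n, if ρ i = k then x i else 0)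
            = ∑ i : Fin n, if Quotient.mk S i = Quotient.mk S k then x i else 0 := by
              refine Finset.sum_congr rfl fun i _ => ?_
              by_cases hh : ρ i = k
              · rw [if_pos hh, if_pos ((hiff i).1 hh)]
              · rw [if_neg hh, if_neg fun hq => hh ((hiff i).2 hq)]
          _ = 0 := hx0 _
      · refine Finset.sum_eq_zero fun i _ => ?_
        have : ρ i ≠ k := fun h => hk (by rw [← h, hρρ])
        simp [this]
    have hx' : x = ∑ i : Fin n, x i • (ee i - ee (ρ i)) := by
      simp only [smul_sub]
      rw [Finset.sum_sub_distrib, hr, sub_zero, ← hbasis]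
    rw [hx']
    refine Submodule.sum_mem _ fun i _ => Submodule.smul_mem _ _ ?_
    refine Submodule.subset_span ⟨i, ρ i, ?_, rfl⟩
    exact Setoid.symm (Quotient.exact (hρ i))
  have hker : LinearMap.ker (phi S) = U := le_antisymm hkerU hUker
  -- surjectivity
  have hsurj : Function.Surjective (phi S) := by
    intro y
    refine ⟨fun i => if (Quotient.mk S i).out = i then y (Quotient.mk S i) else 0, ?_⟩
    funext c
    rw [phi_apply]
    rw [Finset.sum_eq_single c.out]
    · simp [Quotient.out_eq]
    · intro i _ hic
      by_cases h : Quotient.mk S i = c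
      · have h2 : c.out ≠ i := fun hh => hic hh.symm
        simp [h, h2]
      · simp [h]
    · simp
  have hrn := LinearMap.finrank_range_add_finrank_ker (phi S)
  rw [LinearMap.range_eq_top.2 hsurj] at hrn
  rw [hker] at hrn
  have h1 : Module.finrank ℝ (⊤ : Submodule ℝ (Quotient S → ℝ))
      = Nat.card (Quotient S) := by
    rw [finrank_top, Module.finrank_fintype_fun_eq_card, Nat.card_eq_fintype_card]
  have h2 : Module.finrank ℝ (Fin n → ℝ) = n := by
    rw [Module.finrank_fintype_fun_eq_card, Fintype.card_fin]
  rw [h1, h2] at hrn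
  omega


end Stmt7Aux

open Stmt7Aux in
/-- Feichtner–Sturmfels: the dimension of the matroid polytope of a matroid `M`
on `[n]` equals `n - c(M)`, where `c(M)` is the number of connected components of `M`, i.e.
the number of classes of the equivalence relation on the ground set generated by
"`i ~ j` iff some circuit contains both `i` and `j`".  (A circuit is a minimal dependent set;
the dimension of a polytope is the rank of the direction of its affine hull.) -/
theorem stmt7 {n : ℕ} (M : Matroid (Fin n)) (hE : M.E = Set.univ) :
    let circuit : Set (Fin n) → Prop := fun C => ¬ M.Indep C ∧ ∀ D ⊂ C, M.Indep D
    let rel : Fin n → Fin n → Prop := fun i j => ∃ C, circuit C ∧ i ∈ C ∧ j ∈ C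
    Module.finrank ℝ
        (affineSpan ℝ
          {x : Fin n → ℝ | ∃ B, M.IsBase B ∧ x = B.indicator fun _ => (1 : ℝ)}).direction
      = n - Nat.card (Quotient (Relation.EqvGen.setoid rel)) := by
  intro circuit rel
  classical
  set S : Setoid (Fin n) := Relation.EqvGen.setoid rel with hS
  set P : Set (Fin n → ℝ) := {x | ∃ B, M.IsBase B ∧ x = B.indicator fun _ => (1:ℝ)} with hP
  set U := Submodule.span ℝ {x : Fin n → ℝ | ∃ i j, S.r i j ∧ x = ee i - ee j} with hU
  have hUgen : ∀ i j : Fin n,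
      (∃ C, (¬ M.Indep C ∧ ∀ D ⊂ C, M.Indep D) ∧ i ∈ C ∧ j ∈ C) → ee i - ee j ∈ U := by
    intro i j h
    exact Submodule.subset_span ⟨i, j, Relation.EqvGen.rel i j h, rfl⟩
  have hspan : vectorSpan ℝ P = U := by
    apply le_antisymm
    · rw [vectorSpan_def, Submodule.span_le]
      rintro v hv
      rw [Set.mem_vsub] at hv
      obtain ⟨a, ha, b, hb, rfl⟩ := hv
      obtain ⟨B, hB, rfl⟩ := ha
      obtain ⟨B', hB', rfl⟩ := hb
      rw [vsub_eq_sub]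
      exact diff_mem M hE U hUgen B B' hB hB'
    · rw [hU, Submodule.span_le]
      rintro v ⟨i, j, hij, rfl⟩
      have hij' : Relation.EqvGen rel i j := hij
      clear hij
      rw [SetLike.mem_coe]
      induction hij' with
      | rel i j h =>
        obtain ⟨C, hC, hiC, hjC⟩ := h
        by_cases hijeq : i = j
        · subst hijeq; rw [sub_self]; exact zero_mem _
        · obtain ⟨B, hB, hiB, hjB, hB₂⟩ := circ_pair hE hC hiC hjC hijeq
          have h1 : i ∈ insert i (B \ {j}) := Set.mem_insert _ _
          have h2 : j ∉ insert i (B \ {j}) := by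
            simp [Ne.symm hijeq]
          have h3 : insert j ((insert i (B \ {j})) \ {i}) = B := by
            ext x
            simp only [Set.mem_insert_iff, Set.mem_diff, Set.mem_singleton_iff]
            constructor
            · rintro (rfl | ⟨rfl | ⟨hxB, _⟩, hxi⟩)
              · exact hjB
              · exact absurd rfl hxi
              · exact hxB
            · intro hxB
              by_cases hxj : x = j
              · exact Or.inl hxj
              · exact Or.inr ⟨Or.inr ⟨hxB, hxj⟩, fun h => hiB (h ▸ hxB)⟩
          have hid := indicator_insert_diff h1 h2 hijeq
          rw [h3] at hid
          rw [← hid]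
          have := vsub_mem_vectorSpan ℝ
            (show (insert i (B \ {j})).indicator (fun _ => (1:ℝ)) ∈ P from ⟨_, hB₂, rfl⟩)
            (show B.indicator (fun _ => (1:ℝ)) ∈ P from ⟨_, hB, rfl⟩)
          rwa [vsub_eq_sub] at this
      | refl i => rw [sub_self]; exact zero_mem _
      | symm i j h ih =>
        have := Submodule.neg_mem _ ih
        rwa [neg_sub] at this
      | trans i j k h1 h2 ih1 ih2 =>
        have := Submodule.add_mem _ ih1 ih2
        rwa [sub_add_sub_cancel] at this
  rw [direction_affineSpan, hspan, hU]
  exact finrank_span_rel S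
end

section
/- For the generalized Catalan matroid polytope P(M[E^m N^r, Q]), the number of edges equals the sum, over all lattice paths P' from (0,0) to (m,r) lying weakly below Q, of the area between P' and the path E^m N^r (equivalently, the number of unit squares below P' within the m×r rectangle). -/
open Finset

namespace Stmt8Aux

section Basics
variable {α : Type*} [DecidableEq α]

noncomputable def vtx (B : Finset α) : α → ℝ := fun i => if i ∈ B then 1 else 0

lemma vtx_inj : Function.Injective (vtx (α := α)) := by
  intro B C h
  ext x
  have := congrFun h x
  simp only [vtx] at this
  by_cases hB : x ∈ B <;> by_cases hC : x ∈ C <;> simp [hB, hC] at this ⊢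

lemma vtx_mem_segment {B C D : Finset α} {j : α} (hjB : j ∈ B) (hjC : j ∉ C)
    (h : vtx D ∈ segment ℝ (vtx B) (vtx C)) : vtx D = vtx B ∨ vtx D = vtx C := by
  obtain ⟨a, b, ha, hb, hab, hx⟩ := h
  have hj := congrFun hx j
  simp only [Pi.add_apply, Pi.smul_apply, vtx, if_pos hjB, if_neg hjC, smul_eq_mul,
    mul_one, mul_zero, add_zero] at hj
  by_cases hD : j ∈ D
  · left
    rw [if_pos hD] at hj
    have hb0 : b = 0 := by linarith
    rw [← hx, hj, hb0]
    simp
  · right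
    rw [if_neg hD] at hj
    have hb1 : b = 1 := by linarith
    rw [← hx, hj, hb1]
    simp

lemma vtx_add_swap {B C : Finset α} {j i : α} (hjB : j ∈ B) (hjC : j ∉ C)
    (hiC : i ∈ C) (hiB : i ∉ B) :
    vtx B + vtx C = vtx (insert i (B.erase j)) + vtx (insert j (C.erase i)) := by
  have hij : i ≠ j := fun h => hiB (h ▸ hjB)
  funext k
  simp only [Pi.add_apply, vtx, Finset.mem_insert, Finset.mem_erase]
  by_cases h1 : k = i
  · subst h1
    simp [hij, hiB, hiC]
  · by_cases h2 : k = j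
    · simp [h2, hjB, hjC, hij.symm]
    · by_cases h3 : k ∈ B <;> by_cases h4 : k ∈ C <;> simp [h1, h2, h3, h4]


end Basics

section LinFace

variable {ι : Type*} [Fintype ι] [DecidableEq ι]

noncomputable def lf (c : ι → ℝ) : (ι → ℝ) →ₗ[ℝ] ℝ where
  toFun := fun x => ∑ i, c i * x i
  map_add' := fun x y => by
    simp [mul_add, Finset.sum_add_distrib]
  map_smul' := fun t x => by
    simp [Finset.mul_sum, smul_eq_mul]
    congr 1
    funext i
    ring

lemma lf_vtx (c : ι → ℝ) (D : Finset ι) : lf c (vtx D) = ∑ k ∈ D, c k := by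
  simp only [lf, vtx, LinearMap.coe_mk, AddHom.coe_mk, mul_ite, mul_one, mul_zero]
  rw [Finset.sum_ite_mem, Finset.univ_inter]

variable {E : Type*} [AddCommGroup E] [Module ℝ E]

lemma endpoint_mem_extremePoints {A : Set E} {v w : E} (hvw : v ≠ w)
    (he : IsExtreme ℝ A (segment ℝ v w)) : v ∈ A.extremePoints ℝ := by
  have hvA : v ∈ A := he.1 (left_mem_segment ℝ v w)
  rw [mem_extremePoints]
  refine ⟨hvA, fun x₁ hx₁ x₂ hx₂ hseg => ?_⟩
  obtain ⟨hx₁e, hx₂e⟩ : x₁ ∈ segment ℝ v w ∧ x₂ ∈ segment ℝ v w :=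
    ⟨he.2 hx₁ hx₂ (left_mem_segment ℝ v w) hseg,
      he.right_mem_of_mem_openSegment hx₁ hx₂ (left_mem_segment ℝ v w) hseg⟩
  obtain ⟨a1, b1, ha1, hb1, hab1, hx1⟩ := hx₁e
  obtain ⟨a2, b2, ha2, hb2, hab2, hx2⟩ := hx₂e
  obtain ⟨t1, t2, ht1, ht2, ht, hv⟩ := hseg
  have hveq : v = t1 • (a1 • v + b1 • w) + t2 • (a2 • v + b2 • w) := by
    rw [hx1, hx2, hv]
  have hsum : t1 * a1 + t2 * a2 + (t1 * b1 + t2 * b2) = 1 := by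
    linear_combination t1 * hab1 + t2 * hab2 + ht
  have hβ : (t1 * b1 + t2 * b2) • (w - v) = 0 := by
    calc (t1 * b1 + t2 * b2) • (w - v)
        = (t1 • (a1 • v + b1 • w) + t2 • (a2 • v + b2 • w))
            - (t1 * a1 + t2 * a2 + (t1 * b1 + t2 * b2)) • v := by module
      _ = v - (1 : ℝ) • v := by rw [← hveq, hsum]
      _ = 0 := by module
  have hβ0 : t1 * b1 + t2 * b2 = 0 := by
    rcases smul_eq_zero.1 hβ with h | h
    · exact h
    · exact absurd (sub_eq_zero.1 h).symm hvw
  have hb10 : b1 = 0 := by nlinarith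
  have hb20 : b2 = 0 := by nlinarith
  have ha11 : a1 = 1 := by linarith
  have ha21 : a2 = 1 := by linarith
  constructor
  · rw [← hx1, hb10, ha11]; simp
  · rw [← hx2, hb20, ha21]; simp

lemma prefix_swap {B : Finset ι} {j i : ι} (f : ι → Prop) [DecidablePred f]
    (hj : j ∈ B) (hi : i ∉ B) :
    ((insert i (B.erase j)).filter f).card + (if f j then 1 else 0)
      = (B.filter f).card + (if f i then 1 else 0) := by
  have hij : i ≠ j := fun h => hi (h ▸ hj)
  rw [Finset.filter_insert, Finset.filter_erase]
  by_cases hfi : f i <;> by_cases hfj : f j <;> simp only [hfi, hfj, if_true, if_false]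
  · have hjm : j ∈ B.filter f := Finset.mem_filter.2 ⟨hj, hfj⟩
    have him : i ∉ (B.filter f).erase j := by
      simp [Finset.mem_erase, Finset.mem_filter, hi]
    rw [Finset.card_insert_of_notMem him, Finset.card_erase_of_mem hjm]
    have : 1 ≤ (B.filter f).card := Finset.card_pos.2 ⟨j, hjm⟩
    omega
  · have hjm : j ∉ B.filter f := fun h => hfj (Finset.mem_filter.1 h).2
    rw [Finset.erase_eq_of_notMem hjm]
    have him : i ∉ B.filter f := fun h => hi (Finset.mem_filter.1 h).1
    rw [Finset.card_insert_of_notMem him]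
  · have hjm : j ∈ B.filter f := Finset.mem_filter.2 ⟨hj, hfj⟩
    rw [Finset.card_erase_of_mem hjm]
    have : 1 ≤ (B.filter f).card := Finset.card_pos.2 ⟨j, hjm⟩
    omega
  · have hjm : j ∉ B.filter f := fun h => hfj (Finset.mem_filter.1 h).2
    rw [Finset.erase_eq_of_notMem hjm]


end LinFace

section Face

variable {E : Type*} [DecidableEq E] [AddCommGroup E] [Module ℝ E]

lemma isExtreme_face (s : Set E) (f : E →ₗ[ℝ] ℝ) (M : ℝ)
    (hs : ∀ x ∈ s, f x ≤ M) : IsExtreme ℝ s {x | x ∈ s ∧ f x = M} := by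
  constructor
  · exact fun x hx => hx.1
  · rintro x₁ hx₁ x₂ hx₂ x ⟨hxs, hfx⟩ ⟨a, b, ha, hb, hab, hx⟩
    have h1 := hs x₁ hx₁
    have h2 := hs x₂ hx₂
    have hsum : a * f x₁ + b * f x₂ = M := by
      rw [← hfx, ← hx]
      simp [map_add, map_smul, smul_eq_mul]
    have hM : a * M + b * M = M := by rw [← add_mul, hab, one_mul]
    have hf1 : f x₁ = M := by
      by_contra hne
      have hlt : f x₁ < M := lt_of_le_of_ne h1 hne
      have ha1 := mul_lt_mul_of_pos_left hlt ha
      have hb1 := mul_le_mul_of_nonneg_left h2 hb.le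
      linarith
    have hf2 : f x₂ = M := by
      have ha1 := mul_le_mul_of_nonneg_left h1 ha.le
      by_contra hne
      have hlt : f x₂ < M := lt_of_le_of_ne h2 hne
      have hb1 := mul_lt_mul_of_pos_left hlt hb
      linarith
    exact ⟨hx₁, hf1⟩

lemma face_eq_segment (V : Finset E) (f : E →ₗ[ℝ] ℝ) (M : ℝ)
    (hb : ∀ y ∈ V, f y ≤ M) {v w : E} (hv : v ∈ V) (hw : w ∈ V)
    (hfv : f v = M) (hfw : f w = M) (hvw : v ≠ w)
    (hmax : ∀ y ∈ V, f y = M → y = v ∨ y = w) :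
    {x | x ∈ convexHull ℝ (V : Set E) ∧ f x = M} = segment ℝ v w := by
  ext x
  constructor
  · rintro ⟨hx, hfx⟩
    rw [Finset.convexHull_eq] at hx
    obtain ⟨μ, hμ0, hμ1, hxc⟩ := hx
    rw [Finset.centerMass_eq_of_sum_1 _ _ hμ1] at hxc
    simp only [id_eq] at hxc
    have hfs : ∑ y ∈ V, μ y * f y = M := by
      rw [← hfx, ← hxc]
      simp [map_sum, map_smul, smul_eq_mul]
    have hzero : ∀ y ∈ V, μ y * (M - f y) = 0 := by
      have hsz : ∑ y ∈ V, μ y * (M - f y) = 0 := by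
        have h1 : ∑ y ∈ V, μ y * M = M := by rw [← Finset.sum_mul, hμ1, one_mul]
        have : ∑ y ∈ V, μ y * (M - f y) = (∑ y ∈ V, μ y * M) - ∑ y ∈ V, μ y * f y := by
          rw [← Finset.sum_sub_distrib]
          exact Finset.sum_congr rfl fun y _ => by ring
        rw [this, h1, hfs, sub_self]
      exact fun y hy => (Finset.sum_eq_zero_iff_of_nonneg (fun y hy =>
        mul_nonneg (hμ0 y hy) (sub_nonneg.2 (hb y hy)))).1 hsz y hy
    have hsupp : ∀ y ∈ V, y ≠ v → y ≠ w → μ y = 0 := by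
      intro y hy hyv hyw
      rcases mul_eq_zero.1 (hzero y hy) with h | h
      · exact h
      · have hfy : f y = M := by linarith
        rcases hmax y hy hfy with rfl | rfl
        · exact absurd rfl hyv
        · exact absurd rfl hyw
    have hpair : ({v, w} : Finset E) ⊆ V := by
      intro y hy
      rcases Finset.mem_insert.1 hy with rfl | hy
      · exact hv
      · exact (Finset.mem_singleton.1 hy) ▸ hw
    have hx2 : x = μ v • v + μ w • w := by
      have hp := Finset.sum_pair (f := fun y => μ y • y) hvw
      rw [← hxc, ← hp]
      refine (Finset.sum_subset hpair ?_).symm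
      intro y hy hyp
      have h1 : y ≠ v := fun h => hyp (by simp [h])
      have h2 : y ≠ w := fun h => hyp (by simp [h])
      rw [hsupp y hy h1 h2, zero_smul]
    have hsum2 : μ v + μ w = 1 := by
      rw [← hμ1, ← Finset.sum_pair hvw]
      refine Finset.sum_subset hpair ?_
      intro y hy hyp
      have h1 : y ≠ v := fun h => hyp (by simp [h])
      have h2 : y ≠ w := fun h => hyp (by simp [h])
      exact hsupp y hy h1 h2
    exact ⟨μ v, μ w, hμ0 v hv, hμ0 w hw, hsum2, hx2.symm⟩
  · rintro ⟨a, b, ha, hb', hab, rfl⟩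
    constructor
    · have hseg : segment ℝ v w ⊆ convexHull ℝ (V : Set E) := by
        rw [← convexHull_pair]
        apply convexHull_mono
        intro y hy
        rcases hy with rfl | rfl
        · exact Finset.mem_coe.2 hv
        · exact Finset.mem_coe.2 hw
      exact hseg ⟨a, b, ha, hb', hab, rfl⟩
    · simp only [map_add, map_smul, smul_eq_mul, hfv, hfw]
      rw [← add_mul, hab, one_mul]


end Face

section Catalan

variable {n : ℕ}

def pc (B : Finset (Fin n)) (k : ℕ) : ℕ := (B.filter (fun j : Fin n => (j : ℕ) < k)).card

lemma pc_swap {B : Finset (Fin n)} {j i : Fin n} (hj : j ∈ B) (hi : i ∉ B) (k : ℕ) :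
    pc (insert i (B.erase j)) k + (if (j : ℕ) < k then 1 else 0)
      = pc B k + (if (i : ℕ) < k then 1 else 0) :=
  prefix_swap (fun x : Fin n => (x : ℕ) < k) hj hi

lemma card_swap {B : Finset (Fin n)} {j i : Fin n} (hj : j ∈ B) (hi : i ∉ B) :
    (insert i (B.erase j)).card = B.card := by
  have h1 : i ∉ B.erase j := fun h => hi (Finset.mem_of_mem_erase h)
  rw [Finset.card_insert_of_notMem h1, Finset.card_erase_of_mem hj]
  have : 1 ≤ B.card := Finset.card_pos.2 ⟨j, hj⟩
  omega

lemma feas_downswap {Qs B : Finset (Fin n)} {j i : Fin n}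
    (hp : ∀ k ≤ n, pc B k ≤ pc Qs k) (hj : j ∈ B) (hi : i ∉ B) (hji : (j : ℕ) < (i : ℕ)) :
    ∀ k ≤ n, pc (insert i (B.erase j)) k ≤ pc Qs k := by
  intro k hk
  have h := pc_swap hj hi k
  by_cases hik : (i : ℕ) < k
  · have hjk : (j : ℕ) < k := lt_trans hji hik
    simp only [hik, hjk, if_true] at h
    have := hp k hk
    omega
  · simp only [hik, if_false] at h
    have := hp k hk
    split_ifs at h <;> omega

lemma feas_upswap {Qs B C : Finset (Fin n)} {j i : Fin n}
    (hpB : ∀ k ≤ n, pc B k ≤ pc Qs k) (hpC : ∀ k ≤ n, pc C k ≤ pc Qs k)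
    (hjB : j ∈ B) (hjC : j ∉ C) (hiC : i ∈ C) (hiB : i ∉ B) (hji : (j : ℕ) < (i : ℕ))
    (himin : ∀ x ∈ C, x ∉ B → (i : ℕ) ≤ (x : ℕ)) :
    ∀ k ≤ n, pc (insert j (C.erase i)) k ≤ pc Qs k := by
  intro k hk
  have h := pc_swap hiC hjC k
  by_cases hik : (i : ℕ) < k
  · have hjk : (j : ℕ) < k := lt_trans hji hik
    simp only [hik, hjk, if_true] at h
    have := hpC k hk
    omega
  · by_cases hjk : (j : ℕ) < k
    · simp only [hik, hjk, if_true, if_false] at h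
      have hsub : C.filter (fun x : Fin n => (x : ℕ) < k) ⊆ (B.filter (fun x : Fin n => (x : ℕ) < k)).erase j := by
        intro x hx
        obtain ⟨hxC, hxk⟩ := Finset.mem_filter.1 hx
        have hxj : x ≠ j := fun h' => hjC (h' ▸ hxC)
        have hxB : x ∈ B := by
          by_contra hxB
          exact hik (lt_of_le_of_lt (himin x hxC hxB) hxk)
        exact Finset.mem_erase.2 ⟨hxj, Finset.mem_filter.2 ⟨hxB, hxk⟩⟩
      have hjm : j ∈ B.filter (fun x : Fin n => (x : ℕ) < k) := Finset.mem_filter.2 ⟨hjB, hjk⟩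
      have hcard := Finset.card_le_card hsub
      rw [Finset.card_erase_of_mem hjm] at hcard
      have h1 : 1 ≤ (B.filter (fun x : Fin n => (x : ℕ) < k)).card := Finset.card_pos.2 ⟨j, hjm⟩
      have h2 := hpB k hk
      unfold pc at h h2 ⊢
      omega
    · simp only [hik, hjk, if_false] at h
      have := hpC k hk
      omega


-- the weight function for the exchange pair (j, i)
noncomputable def cw (B : Finset (Fin n)) (j i : Fin n) : Fin n → ℝ :=
  fun k => if k ∈ B.erase j then 2 else if k = j ∨ k = i then 1 else 0

lemma lf_cw (B : Finset (Fin n)) (j : Fin n) {i : Fin n} (hi : i ∉ B) (D : Finset (Fin n)) :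
    lf (cw B j i) (vtx D)
      = 2 * ((D.filter (fun k => k ∈ B.erase j)).card : ℝ)
        + ((D.filter (fun k => k = j ∨ k = i)).card : ℝ) := by
  rw [lf_vtx]
  have hck : ∀ k, cw B j i k
      = (if k ∈ B.erase j then (2:ℝ) else 0) + (if k = j ∨ k = i then 1 else 0) := by
    intro k
    by_cases hk : k ∈ B.erase j
    · have h1 : k ≠ j := (Finset.mem_erase.1 hk).1
      have h2 : k ≠ i := fun h => hi (h ▸ Finset.mem_of_mem_erase hk)
      simp [cw, hk, h1, h2]
    · simp [cw, hk]
  simp only [hck]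
  rw [Finset.sum_add_distrib]
  congr 1
  · rw [← Finset.sum_filter, Finset.sum_const, nsmul_eq_mul]
    ring
  · rw [← Finset.sum_filter, Finset.sum_const, nsmul_eq_mul]
    ring

lemma key_bound {r : ℕ} {B : Finset (Fin n)} {j i : Fin n}
    (hj : j ∈ B) (hi : i ∉ B) (hB : B.card = r) {D : Finset (Fin n)} (hD : D.card = r) :
    lf (cw B j i) (vtx D) ≤ 2 * r - 1
      ∧ (lf (cw B j i) (vtx D) = 2 * r - 1 → D = B ∨ D = insert i (B.erase j)) := by
  have hij : i ≠ j := fun h => hi (h ▸ hj)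
  have hr : 1 ≤ r := hB ▸ Finset.card_pos.2 ⟨j, hj⟩
  have hce : (B.erase j).card = r - 1 := by rw [Finset.card_erase_of_mem hj, hB]
  set a := (D.filter (fun k => k ∈ B.erase j)).card with ha_def
  set b := (D.filter (fun k => k = j ∨ k = i)).card with hb_def
  have hsubA : D.filter (fun k => k ∈ B.erase j) ⊆ B.erase j :=
    fun k hk => (Finset.mem_filter.1 hk).2
  have hsubB : D.filter (fun k => k = j ∨ k = i) ⊆ ({j, i} : Finset (Fin n)) := by
    intro k hk
    rcases (Finset.mem_filter.1 hk).2 with rfl | rfl <;> simp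
  have hpair : ({j, i} : Finset (Fin n)).card = 2 := Finset.card_pair (Ne.symm hij)
  have ha : a ≤ r - 1 := hce ▸ Finset.card_le_card hsubA
  have hb : b ≤ 2 := hpair ▸ Finset.card_le_card hsubB
  have hval := lf_cw B j hi D
  have hkey : 2 * a + b + 1 ≤ 2 * r := by
    by_contra hcon
    have ha' : a = r - 1 := by omega
    have hb' : b = 2 := by omega
    have hBD : B.erase j ⊆ D := by
      have := Finset.eq_of_subset_of_card_le hsubA (by omega)
      rw [← this]
      exact Finset.filter_subset _ _
    have hjiD : ({j, i} : Finset (Fin n)) ⊆ D := by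
      have := Finset.eq_of_subset_of_card_le hsubB (by omega)
      rw [← this]
      exact Finset.filter_subset _ _
    have hiD : i ∉ B.erase j := fun h => hi (Finset.mem_of_mem_erase h)
    have hjU : j ∉ insert i (B.erase j) := by
      simp [Ne.symm hij, Finset.mem_erase]
    have hsub : insert j (insert i (B.erase j)) ⊆ D := by
      apply Finset.insert_subset (hjiD (by simp))
      exact Finset.insert_subset (hjiD (by simp)) hBD
    have hcard := Finset.card_le_card hsub
    rw [Finset.card_insert_of_notMem hjU, Finset.card_insert_of_notMem hiD, hce, hD] at hcard
    omega
  constructor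
  · rw [hval]
    have h2 : ((2 * a + b : ℕ) : ℝ) ≤ ((2 * r - 1 : ℕ) : ℝ) := by exact_mod_cast (by omega : 2*a+b ≤ 2*r-1)
    push_cast [Nat.cast_sub (by omega : 1 ≤ 2 * r)] at h2
    linarith
  · intro heq
    rw [hval] at heq
    have hnat : 2 * a + b + 1 = 2 * r := by
      have : ((2 * a + b + 1 : ℕ) : ℝ) = ((2 * r : ℕ) : ℝ) := by push_cast; linarith
      exact_mod_cast this
    have ha' : a = r - 1 := by omega
    have hb' : b = 1 := by omega
    have hBD : B.erase j ⊆ D := by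
      have := Finset.eq_of_subset_of_card_le hsubA (by omega)
      rw [← this]
      exact Finset.filter_subset _ _
    obtain ⟨x, hx⟩ := Finset.card_eq_one.1 hb'
    have hxD : x ∈ D ∧ (x = j ∨ x = i) := by
      have : x ∈ D.filter (fun k => k = j ∨ k = i) := hx ▸ Finset.mem_singleton_self x
      exact ⟨(Finset.mem_filter.1 this).1, (Finset.mem_filter.1 this).2⟩
    have hxe : x ∉ B.erase j := by
      rcases hxD.2 with rfl | rfl
      · simp
      · exact fun h => hi (Finset.mem_of_mem_erase h)
    have hsub : insert x (B.erase j) ⊆ D := Finset.insert_subset hxD.1 hBD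
    have hcard : (insert x (B.erase j)).card = r := by
      rw [Finset.card_insert_of_notMem hxe, hce]; omega
    have hDx : D = insert x (B.erase j) :=
      (Finset.eq_of_subset_of_card_le hsub (by omega)).symm
    rcases hxD.2 with rfl | rfl
    · left; rw [hDx, Finset.insert_erase hj]
    · right; rw [hDx]

lemma key_val_B {r : ℕ} {B : Finset (Fin n)} {j i : Fin n}
    (hj : j ∈ B) (hi : i ∉ B) (hB : B.card = r) :
    lf (cw B j i) (vtx B) = 2 * r - 1 := by
  have hij : i ≠ j := fun h => hi (h ▸ hj)
  have hr : 1 ≤ r := hB ▸ Finset.card_pos.2 ⟨j, hj⟩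
  rw [lf_cw B j hi]
  have h1 : B.filter (fun k => k ∈ B.erase j) = B.erase j := by
    ext k
    simp only [Finset.mem_filter, Finset.mem_erase]
    exact ⟨fun h => h.2, fun h => ⟨h.2, h⟩⟩
  have h2 : B.filter (fun k => k = j ∨ k = i) = {j} := by
    ext k
    simp only [Finset.mem_filter, Finset.mem_singleton]
    constructor
    · rintro ⟨hk, rfl | rfl⟩
      · rfl
      · exact absurd hk hi
    · rintro rfl; exact ⟨hj, Or.inl rfl⟩
  rw [h1, h2, Finset.card_erase_of_mem hj, hB, Finset.card_singleton]
  push_cast [Nat.cast_sub hr]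
  ring

lemma key_val_C {r : ℕ} {B : Finset (Fin n)} {j i : Fin n}
    (hj : j ∈ B) (hi : i ∉ B) (hB : B.card = r) :
    lf (cw B j i) (vtx (insert i (B.erase j))) = 2 * r - 1 := by
  have hij : i ≠ j := fun h => hi (h ▸ hj)
  have hr : 1 ≤ r := hB ▸ Finset.card_pos.2 ⟨j, hj⟩
  have hie : i ∉ B.erase j := fun h => hi (Finset.mem_of_mem_erase h)
  rw [lf_cw B j hi]
  have h1 : (insert i (B.erase j)).filter (fun k => k ∈ B.erase j) = B.erase j := by
    ext k
    simp only [Finset.mem_filter, Finset.mem_insert]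
    constructor
    · exact fun h => h.2
    · intro h; exact ⟨Or.inr h, h⟩
  have h2 : (insert i (B.erase j)).filter (fun k => k = j ∨ k = i) = {i} := by
    ext k
    simp only [Finset.mem_filter, Finset.mem_insert, Finset.mem_singleton, Finset.mem_erase]
    constructor
    · rintro ⟨hk, rfl | rfl⟩
      · rcases hk with h | h
        · exact absurd h (Ne.symm hij)
        · exact absurd h (by simp)
      · rfl
    · rintro rfl; exact ⟨Or.inl rfl, Or.inr rfl⟩
  rw [h1, h2, Finset.card_erase_of_mem hj, hB, Finset.card_singleton]
  push_cast [Nat.cast_sub hr]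
  ring

lemma edge_of_swap {r : ℕ} (V : Finset (Fin n → ℝ)) {B : Finset (Fin n)} {j i : Fin n}
    (hj : j ∈ B) (hi : i ∉ B) (hB : B.card = r)
    (hmem : ∀ y ∈ V, ∃ D : Finset (Fin n), D.card = r ∧ y = vtx D)
    (hBV : vtx B ∈ V) (hCV : vtx (insert i (B.erase j)) ∈ V) :
    IsExtreme ℝ (convexHull ℝ (V : Set (Fin n → ℝ)))
      (segment ℝ (vtx B) (vtx (insert i (B.erase j)))) := by
  classical
  set C := insert i (B.erase j) with hC
  set f := lf (cw B j i) with hf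
  set M : ℝ := 2 * r - 1 with hM
  have hb : ∀ y ∈ V, f y ≤ M := by
    intro y hy
    obtain ⟨D, hD, rfl⟩ := hmem y hy
    exact (key_bound hj hi hB hD).1
  have hmax : ∀ y ∈ V, f y = M → y = vtx B ∨ y = vtx C := by
    intro y hy hfy
    obtain ⟨D, hD, rfl⟩ := hmem y hy
    rcases (key_bound hj hi hB hD).2 hfy with rfl | rfl
    · exact Or.inl rfl
    · exact Or.inr rfl
  have hvw : vtx B ≠ vtx C := by
    intro h
    have hBC := vtx_inj h
    apply hi
    rw [hBC]
    exact Finset.mem_insert_self i _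
  have hs : ∀ x ∈ convexHull ℝ (V : Set (Fin n → ℝ)), f x ≤ M := by
    intro x hx
    have : convexHull ℝ (V : Set (Fin n → ℝ)) ⊆ {x | f x ≤ M} :=
      convexHull_min (fun y hy => hb y hy) (convex_halfSpace_le (LinearMap.isLinear f) M)
    exact this hx
  have hface := face_eq_segment V f M hb hBV hCV (key_val_B hj hi hB) (key_val_C hj hi hB) hvw hmax
  have := isExtreme_face (convexHull ℝ (V : Set (Fin n → ℝ))) f M hs
  rwa [hface] at this


lemma classify_core {r : ℕ} {Qs : Finset (Fin n)} (V : Finset (Fin n → ℝ))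
    {B C : Finset (Fin n)}
    (hBc : B.card = r) (hBp : ∀ k ≤ n, pc B k ≤ pc Qs k)
    (hCc : C.card = r) (hCp : ∀ k ≤ n, pc C k ≤ pc Qs k)
    (hne : B ≠ C)
    (hVmem : ∀ D : Finset (Fin n), D.card = r → (∀ k ≤ n, pc D k ≤ pc Qs k) → vtx D ∈ V)
    (hext : IsExtreme ℝ (convexHull ℝ (V : Set (Fin n → ℝ))) (segment ℝ (vtx B) (vtx C)))
    {j : Fin n} (hjB : j ∈ B) (hjC : j ∉ C)
    (hjmin : ∀ x : Fin n, (x ∈ B ∧ x ∉ C) ∨ (x ∈ C ∧ x ∉ B) → (j : ℕ) ≤ (x : ℕ)) :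
    ∃ i : Fin n, i ∉ B ∧ (j : ℕ) < (i : ℕ) ∧ C = insert i (B.erase j) := by
  classical
  have hCB : (C \ B).Nonempty := by
    rw [Finset.sdiff_nonempty]
    intro hsub
    exact hne ((Finset.eq_of_subset_of_card_le hsub (by omega)).symm)
  set i := (C \ B).min' hCB with hi_def
  have hiCB : i ∈ C \ B := Finset.min'_mem _ _
  have hiC : i ∈ C := (Finset.mem_sdiff.1 hiCB).1
  have hiB : i ∉ B := (Finset.mem_sdiff.1 hiCB).2
  have himin : ∀ x ∈ C, x ∉ B → (i : ℕ) ≤ (x : ℕ) := by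
    intro x hx hxB
    exact Finset.min'_le _ _ (Finset.mem_sdiff.2 ⟨hx, hxB⟩)
  have hji : (j : ℕ) < (i : ℕ) := by
    have hle := hjmin i (Or.inr ⟨hiC, hiB⟩)
    have : j ≠ i := fun h => hiB (h ▸ hjB)
    have : (j : ℕ) ≠ (i : ℕ) := fun h => this (Fin.ext h)
    omega
  by_cases hbig : ∃ x : Fin n, ((x ∈ B ∧ x ∉ C) ∨ (x ∈ C ∧ x ∉ B)) ∧ x ≠ j ∧ x ≠ i
  · exfalso
    obtain ⟨x, hxSD, hxj, hxi⟩ := hbig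
    set B' := insert i (B.erase j) with hB'
    set C' := insert j (C.erase i) with hC'
    have hB'c : B'.card = r := by rw [hB', card_swap hjB hiB, hBc]
    have hC'c : C'.card = r := by rw [hC', card_swap hiC hjC, hCc]
    have hB'p := feas_downswap hBp hjB hiB hji
    have hC'p := feas_upswap hBp hCp hjB hjC hiC hiB hji himin
    have hsum := vtx_add_swap hjB hjC hiC hiB
    have hB'H : vtx B' ∈ convexHull ℝ (V : Set (Fin n → ℝ)) :=
      subset_convexHull ℝ _ (Finset.mem_coe.2 (hVmem B' hB'c hB'p))
    have hC'H : vtx C' ∈ convexHull ℝ (V : Set (Fin n → ℝ)) :=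
      subset_convexHull ℝ _ (Finset.mem_coe.2 (hVmem C' hC'c hC'p))
    have hmid : (1/2 : ℝ) • vtx B + (1/2 : ℝ) • vtx C ∈ segment ℝ (vtx B) (vtx C) :=
      ⟨1/2, 1/2, by norm_num, by norm_num, by norm_num, rfl⟩
    have hopen : (1/2 : ℝ) • vtx B + (1/2 : ℝ) • vtx C
        ∈ openSegment ℝ (vtx B') (vtx C') := by
      refine ⟨1/2, 1/2, by norm_num, by norm_num, by norm_num, ?_⟩
      have := congrArg (fun v : Fin n → ℝ => (1/2 : ℝ) • v) hsum
      simp only [smul_add] at this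
      exact this.symm
    have h1 := hext.2 hB'H hC'H hmid hopen
    rcases vtx_mem_segment hjB hjC h1 with h | h
    · have hBB : B' = B := vtx_inj h
      exact hiB (hBB ▸ Finset.mem_insert_self i (B.erase j))
    · have hBC : B' = C := vtx_inj h
      rcases hxSD with ⟨hxB, hxC⟩ | ⟨hxC, hxB⟩
      · have : x ∈ B' := Finset.mem_insert.2 (Or.inr (Finset.mem_erase.2 ⟨hxj, hxB⟩))
        exact hxC (hBC ▸ this)
      · have : x ∈ B' := hBC ▸ hxC
        rcases Finset.mem_insert.1 this with h' | h'
        · exact hxi h'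
        · exact hxB (Finset.mem_of_mem_erase h')
  · push_neg at hbig
    refine ⟨i, hiB, hji, ?_⟩
    ext x
    simp only [Finset.mem_insert, Finset.mem_erase]
    constructor
    · intro hxC
      by_cases hxB : x ∈ B
      · have hxj : x ≠ j := fun h => hjC (h ▸ hxC)
        exact Or.inr ⟨hxj, hxB⟩
      · have hx := hbig x (Or.inr ⟨hxC, hxB⟩)
        have hxj : x ≠ j := fun h => hxB (h ▸ hjB)
        exact Or.inl (hx hxj)
    · rintro (rfl | ⟨hxj, hxB⟩)
      · exact hiC
      · by_contra hxC
        have hx := hbig x (Or.inl ⟨hxB, hxC⟩) hxj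
        exact hiB (hx ▸ hxB)

lemma classify {r : ℕ} {Qs : Finset (Fin n)} (V : Finset (Fin n → ℝ))
    {B C : Finset (Fin n)}
    (hBc : B.card = r) (hBp : ∀ k ≤ n, pc B k ≤ pc Qs k)
    (hCc : C.card = r) (hCp : ∀ k ≤ n, pc C k ≤ pc Qs k)
    (hne : B ≠ C)
    (hVmem : ∀ D : Finset (Fin n), D.card = r → (∀ k ≤ n, pc D k ≤ pc Qs k) → vtx D ∈ V)
    (hext : IsExtreme ℝ (convexHull ℝ (V : Set (Fin n → ℝ))) (segment ℝ (vtx B) (vtx C))) :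
    ∃ (B₀ : Finset (Fin n)) (j i : Fin n), B₀.card = r ∧ (∀ k ≤ n, pc B₀ k ≤ pc Qs k) ∧
      j ∈ B₀ ∧ i ∉ B₀ ∧ (j : ℕ) < (i : ℕ) ∧
      segment ℝ (vtx B) (vtx C) = segment ℝ (vtx B₀) (vtx (insert i (B₀.erase j))) := by
  classical
  have hSD : ((B \ C) ∪ (C \ B)).Nonempty := by
    by_contra h
    rw [Finset.not_nonempty_iff_eq_empty, Finset.union_eq_empty] at h
    exact hne (Finset.Subset.antisymm
      (Finset.sdiff_eq_empty_iff_subset.1 h.1) (Finset.sdiff_eq_empty_iff_subset.1 h.2))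
  set j := ((B \ C) ∪ (C \ B)).min' hSD with hj_def
  have hjmem := Finset.min'_mem _ hSD
  have hjmin : ∀ x : Fin n, (x ∈ B ∧ x ∉ C) ∨ (x ∈ C ∧ x ∉ B) → (j : ℕ) ≤ (x : ℕ) := by
    intro x hx
    have hxm : x ∈ B \ C ∪ C \ B := by
      rcases hx with ⟨h1, h2⟩ | ⟨h1, h2⟩
      · exact Finset.mem_union.2 (Or.inl (Finset.mem_sdiff.2 ⟨h1, h2⟩))
      · exact Finset.mem_union.2 (Or.inr (Finset.mem_sdiff.2 ⟨h1, h2⟩))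
    exact Fin.le_def.1 (Finset.min'_le _ x hxm)
  rcases Finset.mem_union.1 hjmem with hj | hj
  · obtain ⟨hjB, hjC⟩ := Finset.mem_sdiff.1 hj
    obtain ⟨i, hiB, hji, hCeq⟩ :=
      classify_core V hBc hBp hCc hCp hne hVmem hext hjB hjC hjmin
    exact ⟨B, j, i, hBc, hBp, hjB, hiB, hji, by rw [← hCeq]⟩
  · obtain ⟨hjC, hjB⟩ := Finset.mem_sdiff.1 hj
    have hext' : IsExtreme ℝ (convexHull ℝ (V : Set (Fin n → ℝ)))
        (segment ℝ (vtx C) (vtx B)) := by rwa [segment_symm]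
    have hjmin' : ∀ x : Fin n, (x ∈ C ∧ x ∉ B) ∨ (x ∈ B ∧ x ∉ C) → (j : ℕ) ≤ (x : ℕ) :=
      fun x hx => hjmin x hx.symm
    obtain ⟨i, hiC, hji, hBeq⟩ :=
      classify_core V hCc hCp hBc hBp (Ne.symm hne) hVmem hext' hjC hjB hjmin'
    exact ⟨C, j, i, hCc, hCp, hjC, hiC, hji, by rw [← hBeq, segment_symm]⟩


lemma swap_pair_eq {B : Finset (Fin n)} {j₁ i₁ j₂ i₂ : Fin n}
    (hj₁ : j₁ ∈ B) (hi₁ : i₁ ∉ B) (hj₂ : j₂ ∈ B) (hi₂ : i₂ ∉ B)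
    (h : insert i₁ (B.erase j₁) = insert i₂ (B.erase j₂)) : i₁ = i₂ ∧ j₁ = j₂ := by
  have hii : i₁ = i₂ := by
    have : i₁ ∈ insert i₂ (B.erase j₂) := h ▸ Finset.mem_insert_self i₁ _
    rcases Finset.mem_insert.1 this with h' | h'
    · exact h'
    · exact absurd (Finset.mem_of_mem_erase h') hi₁
  refine ⟨hii, ?_⟩
  by_contra hjj
  have h1 : j₂ ∈ insert i₁ (B.erase j₁) :=
    Finset.mem_insert.2 (Or.inr (Finset.mem_erase.2 ⟨Ne.symm hjj, hj₂⟩))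
  rw [h] at h1
  rcases Finset.mem_insert.1 h1 with h' | h'
  · exact hi₂ (h' ▸ hj₂)
  · exact (Finset.mem_erase.1 h').1 rfl

lemma mem_B_not_C {B : Finset (Fin n)} {j i x : Fin n} (hj : j ∈ B)
    (hx : x ∈ B) (hxC : x ∉ insert i (B.erase j)) : x = j := by
  by_contra h
  exact hxC (Finset.mem_insert.2 (Or.inr (Finset.mem_erase.2 ⟨h, hx⟩)))

lemma mem_C_not_B {B : Finset (Fin n)} {j i x : Fin n}
    (hx : x ∈ insert i (B.erase j)) (hxB : x ∉ B) : x = i := by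
  rcases Finset.mem_insert.1 hx with h | h
  · exact h
  · exact absurd (Finset.mem_of_mem_erase h) hxB

end Catalan

end Stmt8Aux

open Stmt8Aux in
/-- for the generalized Catalan matroid `M[Eᵐ Nʳ, Q]` (bases = `r`-subsets `B`
of the `m+r` step positions whose prefix North-counts never exceed those of `Q`, the path
with North steps at the positions in `Qs`), the number of edges of the matroid polytope
(faces that are nondegenerate segments) equals the sum over all such paths `B` of the area
below the path, i.e. `∑_{i ∉ B} #{j ∈ B : j < i}`. -/
theorem stmt8 (m r : ℕ) (Qs : Finset (Fin (m + r))) (hQ : Qs.card = r) :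
    Nat.card {e : Set (Fin (m + r) → ℝ) //
        (∃ v w : Fin (m + r) → ℝ, v ≠ w ∧ e = segment ℝ v w) ∧
        IsExtreme ℝ
          (convexHull ℝ {x : Fin (m + r) → ℝ |
            ∃ B : Finset (Fin (m + r)), B.card = r ∧
              (∀ i ≤ m + r, (B.filter (fun j : Fin (m + r) => (j : ℕ) < i)).card
                  ≤ (Qs.filter (fun j : Fin (m + r) => (j : ℕ) < i)).card) ∧
              x = fun i => if i ∈ B then 1 else 0}) e}
      = ∑ B ∈ Finset.univ.filter (fun B : Finset (Fin (m + r)) => B.card = r ∧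
            ∀ i ≤ m + r, (B.filter (fun j : Fin (m + r) => (j : ℕ) < i)).card
              ≤ (Qs.filter (fun j : Fin (m + r) => (j : ℕ) < i)).card),
          ∑ i ∈ Finset.univ \ B, (B.filter (fun j : Fin (m + r) => (j : ℕ) < (i : ℕ))).card := by
  letI : DecidableEq (Fin (m + r) → ℝ) := Classical.decEq _
  set F : Finset (Finset (Fin (m + r))) :=
    Finset.univ.filter (fun B : Finset (Fin (m + r)) => B.card = r ∧
      ∀ i ≤ m + r, (B.filter (fun j : Fin (m + r) => (j : ℕ) < i)).card
        ≤ (Qs.filter (fun j : Fin (m + r) => (j : ℕ) < i)).card) with hF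
  have hmemF : ∀ B : Finset (Fin (m + r)),
      B ∈ F ↔ B.card = r ∧ ∀ k ≤ m + r, pc B k ≤ pc Qs k := by
    intro B
    rw [hF, Finset.mem_filter]
    exact ⟨fun h => h.2, fun h => ⟨Finset.mem_univ _, h⟩⟩
  set V : Finset (Fin (m + r) → ℝ) := F.image vtx with hV
  have hVmem : ∀ D : Finset (Fin (m + r)), D.card = r → (∀ k ≤ m + r, pc D k ≤ pc Qs k) →
      vtx D ∈ V := by
    intro D h1 h2
    exact Finset.mem_image_of_mem vtx ((hmemF D).2 ⟨h1, h2⟩)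
  have hVmem' : ∀ y ∈ V, ∃ D : Finset (Fin (m + r)),
      (D.card = r ∧ ∀ k ≤ m + r, pc D k ≤ pc Qs k) ∧ y = vtx D := by
    intro y hy
    obtain ⟨D, hD, rfl⟩ := Finset.mem_image.1 hy
    exact ⟨D, (hmemF D).1 hD, rfl⟩
  have hS : {x : Fin (m + r) → ℝ |
      ∃ B : Finset (Fin (m + r)), B.card = r ∧
        (∀ i ≤ m + r, (B.filter (fun j : Fin (m + r) => (j : ℕ) < i)).card
            ≤ (Qs.filter (fun j : Fin (m + r) => (j : ℕ) < i)).card) ∧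
        x = fun i => if i ∈ B then 1 else 0} = (V : Set (Fin (m + r) → ℝ)) := by
    ext x
    constructor
    · rintro ⟨B, h1, h2, rfl⟩
      exact Finset.mem_coe.2 (Finset.mem_image_of_mem vtx ((hmemF B).2 ⟨h1, h2⟩))
    · intro hx
      obtain ⟨B, hB, hxeq⟩ := Finset.mem_image.1 (Finset.mem_coe.1 hx)
      obtain ⟨h1, h2⟩ := (hmemF B).1 hB
      exact ⟨B, h1, h2, hxeq.symm⟩
  rw [hS]
  -- the index finset
  set TT : Finset ((_ : Finset (Fin (m + r))) × (_ : Fin (m + r)) × Fin (m + r)) :=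
    F.sigma (fun B => (Finset.univ \ B).sigma
      (fun i => B.filter (fun j : Fin (m + r) => (j : ℕ) < (i : ℕ)))) with hTT
  have hmemTT : ∀ t, t ∈ TT ↔ (t.1 ∈ F ∧ t.2.1 ∉ t.1 ∧ t.2.2 ∈ t.1 ∧
      ((t.2.2 : ℕ) < (t.2.1 : ℕ))) := by
    rintro ⟨B, i, j⟩
    simp only [hTT, Finset.mem_sigma, Finset.mem_sdiff, Finset.mem_filter, Finset.mem_univ,
      true_and]
  have hTTcard : TT.card
      = ∑ B ∈ F, ∑ i ∈ Finset.univ \ B,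
          (B.filter (fun j : Fin (m + r) => (j : ℕ) < (i : ℕ))).card := by
    rw [hTT, Finset.card_sigma]
    exact Finset.sum_congr rfl (fun B _ => Finset.card_sigma _ _)
  rw [← hTTcard, ← Nat.card_eq_finsetCard]
  have hmem' : ∀ y ∈ V, ∃ D : Finset (Fin (m + r)), D.card = r ∧ y = vtx D := by
    intro y hy
    obtain ⟨D, hD, h⟩ := hVmem' y hy
    exact ⟨D, hD.1, h⟩
  have hjnotC : ∀ {B : Finset (Fin (m + r))} {j i : Fin (m + r)},
      (j : ℕ) < (i : ℕ) → j ∉ insert i (B.erase j) := by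
    intro B j i hji h
    rcases Finset.mem_insert.1 h with h' | h'
    · rw [h'] at hji; omega
    · exact (Finset.mem_erase.1 h').1 rfl
  have hvtxne : ∀ {B : Finset (Fin (m + r))} {j i : Fin (m + r)},
      i ∉ B → vtx B ≠ vtx (insert i (B.erase j)) := by
    intro B j i hi h
    exact hi ((vtx_inj h) ▸ Finset.mem_insert_self i (B.erase j))
  have hedge : ∀ t : ((_ : Finset (Fin (m + r))) × (_ : Fin (m + r)) × Fin (m + r)), t ∈ TT →
      (∃ v w : Fin (m + r) → ℝ, v ≠ w ∧
        segment ℝ (vtx t.1) (vtx (insert t.2.1 (t.1.erase t.2.2))) = segment ℝ v w) ∧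
      IsExtreme ℝ (convexHull ℝ (V : Set (Fin (m + r) → ℝ)))
        (segment ℝ (vtx t.1) (vtx (insert t.2.1 (t.1.erase t.2.2)))) := by
    rintro ⟨B, i, j⟩ ht
    obtain ⟨hBF, hi, hj, hji⟩ := (hmemTT _).1 ht
    obtain ⟨hcard, hpre⟩ := (hmemF B).1 hBF
    have hCV : vtx (insert i (B.erase j)) ∈ V := by
      apply hVmem
      · rw [card_swap hj hi, hcard]
      · exact feas_downswap hpre hj hi hji
    refine ⟨⟨vtx B, vtx (insert i (B.erase j)), hvtxne hi, rfl⟩, ?_⟩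
    exact edge_of_swap V hj hi hcard hmem' (hVmem B hcard hpre) hCV
  refine (Nat.card_eq_of_bijective
    (fun t : {t // t ∈ TT} => ⟨_, hedge t.1 t.2⟩) ⟨?_, ?_⟩).symm
  · -- injective
    rintro ⟨⟨B₁, i₁, j₁⟩, ht₁⟩ ⟨⟨B₂, i₂, j₂⟩, ht₂⟩ heq
    obtain ⟨hBF₁, hi₁, hj₁, hji₁⟩ := (hmemTT _).1 ht₁
    obtain ⟨hBF₂, hi₂, hj₂, hji₂⟩ := (hmemTT _).1 ht₂
    dsimp only at hBF₁ hi₁ hj₁ hji₁ hBF₂ hi₂ hj₂ hji₂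
    have heq' : segment ℝ (vtx B₁) (vtx (insert i₁ (B₁.erase j₁)))
        = segment ℝ (vtx B₂) (vtx (insert i₂ (B₂.erase j₂))) := congrArg Subtype.val heq
    have hB2mem : vtx B₂ ∈ segment ℝ (vtx B₁) (vtx (insert i₁ (B₁.erase j₁))) := by
      rw [heq']; exact left_mem_segment ℝ _ _
    have hC2mem : vtx (insert i₂ (B₂.erase j₂))
        ∈ segment ℝ (vtx B₁) (vtx (insert i₁ (B₁.erase j₁))) := by
      rw [heq']; exact right_mem_segment ℝ _ _
    rcases vtx_mem_segment hj₁ (hjnotC hji₁) hB2mem with hB2 | hB2 <;>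
      rcases vtx_mem_segment hj₁ (hjnotC hji₁) hC2mem with hC2 | hC2
    · exact absurd (hB2.trans hC2.symm) (hvtxne hi₂)
    · have hBB : B₂ = B₁ := vtx_inj hB2
      subst hBB
      obtain ⟨hii, hjj⟩ := swap_pair_eq hj₂ hi₂ hj₁ hi₁ (vtx_inj hC2)
      subst hii; subst hjj
      rfl
    · -- B₂ = C₁, C₂ = B₁
      exfalso
      have h1 : B₂ = insert i₁ (B₁.erase j₁) := vtx_inj hB2
      have h2 : insert i₂ (B₂.erase j₂) = B₁ := vtx_inj hC2
      have hi₂B₁ : i₂ ∈ B₁ := by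
        rw [← h2]; exact Finset.mem_insert_self _ _
      have hi₂j₁ : i₂ = j₁ := mem_B_not_C hj₁ hi₂B₁ (h1 ▸ hi₂)
      have hj₂C₁ : j₂ ∈ insert i₁ (B₁.erase j₁) := h1 ▸ hj₂
      have hj₂B₁ : j₂ ∉ B₁ := by
        rw [← h2]; exact hjnotC hji₂
      have hj₂i₁ : j₂ = i₁ := mem_C_not_B hj₂C₁ hj₂B₁
      rw [hi₂j₁, hj₂i₁] at hji₂
      omega
    · exact absurd (hB2.trans hC2.symm) (hvtxne hi₂)
  · -- surjective
    rintro ⟨e, ⟨v, w, hvw, rfl⟩, hext⟩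
    have hv : v ∈ (V : Set (Fin (m + r) → ℝ)) :=
      extremePoints_convexHull_subset (endpoint_mem_extremePoints hvw hext)
    have hext' : IsExtreme ℝ (convexHull ℝ (V : Set (Fin (m + r) → ℝ))) (segment ℝ w v) := by
      rwa [segment_symm]
    have hw : w ∈ (V : Set (Fin (m + r) → ℝ)) :=
      extremePoints_convexHull_subset (endpoint_mem_extremePoints (Ne.symm hvw) hext')
    obtain ⟨B, hBf, hveq⟩ := hVmem' v hv
    obtain ⟨C, hCf, hweq⟩ := hVmem' w hw
    subst hveq; subst hweq
    have hne : B ≠ C := fun h => hvw (by rw [h])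
    obtain ⟨B₀, j, i, h1, h2, hjB, hiB, hji, hseg⟩ :=
      classify V hBf.1 hBf.2 hCf.1 hCf.2 hne hVmem hext
    refine ⟨⟨⟨B₀, i, j⟩, (hmemTT _).2 ⟨(hmemF _).2 ⟨h1, h2⟩, hiB, hjB, hji⟩⟩, ?_⟩
    exact Subtype.ext hseg.symm
end

section
/- Let P, Q be lattice paths from (0,0) to (m,r) with P never above Q, and let p_i, q_i denote the number of North steps among the first i steps of P and Q respectively. Then the lattice path matroid polytope P(M[P,Q]) ⊂ ℝ^{m+r} equals the set of points (x_1,...,x_{m+r}) satisfying 0 ≤ x_i ≤ 1 for all i, and p_i ≤ x_1 + ... + x_i ≤ q_i for all 1 ≤ i ≤ m+r (with x_1 + ... + x_{m+r} = r). -/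
open Finset

namespace Stmt10


noncomputable def psum {n : ℕ} (x : Fin n → ℝ) (k : ℕ) : ℝ :=
  ∑ j ∈ Finset.range k, if h : j < n then x ⟨j, h⟩ else 0

lemma psum_zero {n : ℕ} (x : Fin n → ℝ) : psum x 0 = 0 := by simp [psum]

lemma psum_succ {n : ℕ} (x : Fin n → ℝ) {k : ℕ} (hk : k < n) :
    psum x (k + 1) = psum x k + x ⟨k, hk⟩ := by
  simp [psum, Finset.sum_range_succ, hk]

lemma sum_filter_eq_psum {n : ℕ} (x : Fin n → ℝ) {k : ℕ} (hk : k ≤ n) :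
    ∑ j ∈ univ.filter (fun j : Fin n => (j : ℕ) < k), x j = psum x k := by
  rw [Finset.sum_filter]
  have h1 : ∑ j : Fin n, (if (j : ℕ) < k then x j else 0)
      = ∑ j ∈ Finset.range n, (if j < k then (if h : j < n then x ⟨j, h⟩ else 0) else 0) := by
    rw [← Fin.sum_univ_eq_sum_range (fun j => if j < k then (if h : j < n then x ⟨j, h⟩ else 0) else 0) n]
    refine Finset.sum_congr rfl fun j _ => ?_
    simp [j.isLt]
  rw [h1, psum]
  rw [← Finset.sum_subset (Finset.range_subset_range.mpr hk)]
  · refine Finset.sum_congr rfl fun j hj => ?_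
    simp [Finset.mem_range.mp hj]
  · intro j _ hj
    simp only [Finset.mem_range] at hj
    simp [hj]

lemma psum_indicator {n : ℕ} (B : Finset (Fin n)) {k : ℕ} (hk : k ≤ n) :
    psum (fun i => if i ∈ B then (1 : ℝ) else 0) k
      = ((B.filter (fun j : Fin n => (j : ℕ) < k)).card : ℝ) := by
  rw [← sum_filter_eq_psum _ hk, Finset.sum_boole]
  norm_cast
  congr 1
  ext j
  simp [and_comm]


def basisSet (n r : ℕ) (p q : ℕ → ℕ) : Set (Fin n → ℝ) :=
  {x | ∃ B : Finset (Fin n), B.card = r ∧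
    (∀ i ≤ n, p i ≤ (B.filter (fun j : Fin n => (j : ℕ) < i)).card ∧
      (B.filter (fun j : Fin n => (j : ℕ) < i)).card ≤ q i) ∧
    x = fun i => if i ∈ B then 1 else 0}


lemma integral_mem {n r : ℕ} {p q : ℕ → ℕ} (hpn : p n = r) (hqn : q n = r)
    (x : Fin n → ℝ)
    (hx : ∀ i, 0 ≤ x i ∧ x i ≤ 1)
    (hS : ∀ k ≤ n, (p k : ℝ) ≤ psum x k ∧ psum x k ≤ q k)
    (hint : ∀ k ≤ n, Int.fract (psum x k) = 0) :
    x ∈ basisSet n r p q := by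
  classical
  have hfl : ∀ k ≤ n, ((⌊psum x k⌋ : ℝ)) = psum x k := by
    intro k hk
    have := Int.floor_add_fract (psum x k)
    rw [hint k hk] at this; linarith
  have hx01 : ∀ i : Fin n, x i = 0 ∨ x i = 1 := by
    intro i
    have h1 : psum x ((i : ℕ) + 1) = psum x i + x i := by
      rw [psum_succ x i.isLt]
    have h2 := hfl (i : ℕ) (le_of_lt i.isLt)
    have h3 := hfl ((i : ℕ) + 1) i.isLt
    set A := ⌊psum x (i : ℕ)⌋
    set B := ⌊psum x ((i : ℕ) + 1)⌋
    have hxi : x i = ((B - A : ℤ) : ℝ) := by push_cast; linarith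
    have h0 : (0 : ℝ) ≤ ((B - A : ℤ) : ℝ) := hxi ▸ (hx i).1
    have h1' : ((B - A : ℤ) : ℝ) ≤ 1 := hxi ▸ (hx i).2
    have h0' : (0 : ℤ) ≤ B - A := by exact_mod_cast h0
    have h1'' : B - A ≤ 1 := by exact_mod_cast h1'
    interval_cases h : (B - A)
    · left; rw [hxi]; norm_num
    · right; rw [hxi]; norm_num
  set B : Finset (Fin n) := univ.filter (fun i => x i = 1) with hB
  have hxB : x = fun i => if i ∈ B then (1 : ℝ) else 0 := by
    funext i
    rcases hx01 i with h | h
    · rw [h]; simp [hB, h]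
    · rw [h]; simp [hB, h]
  have hcardk : ∀ k ≤ n, ((B.filter (fun j : Fin n => (j : ℕ) < k)).card : ℝ) = psum x k := by
    intro k hk
    rw [← psum_indicator B hk, ← hxB]
  have hfiltB : B.filter (fun j : Fin n => (j : ℕ) < n) = B := by
    apply Finset.filter_true_of_mem
    intro j _; exact j.isLt
  refine ⟨B, ?_, ?_, hxB⟩
  · have h1 := (hS n le_rfl).1
    have h2 := (hS n le_rfl).2
    rw [← hcardk n le_rfl, hfiltB] at h1 h2
    rw [hpn] at h1; rw [hqn] at h2
    have : (B.card : ℝ) = r := le_antisymm h2 h1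
    exact_mod_cast this
  · intro i hi
    have h1 := (hS i hi).1
    have h2 := (hS i hi).2
    rw [← hcardk i hi] at h1 h2
    exact ⟨by exact_mod_cast h1, by exact_mod_cast h2⟩


noncomputable def fracset {n : ℕ} (x : Fin n → ℝ) : Finset ℝ :=
  ((Finset.range (n+1)).image (fun k => Int.fract (psum x k))).filter (fun v => v ≠ 0)

lemma mem_fracset {n : ℕ} {x : Fin n → ℝ} {k : ℕ} (hk : k ≤ n)
    (h : Int.fract (psum x k) ≠ 0) : Int.fract (psum x k) ∈ fracset x := by
  rw [fracset, Finset.mem_filter]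
  exact ⟨Finset.mem_image.mpr ⟨k, Finset.mem_range.mpr (Nat.lt_succ_of_le hk), rfl⟩, h⟩

lemma fracset_spec {n : ℕ} {x : Fin n → ℝ} {v : ℝ} (h : v ∈ fracset x) :
    (∃ k ≤ n, Int.fract (psum x k) = v) ∧ v ≠ 0 := by
  rw [fracset, Finset.mem_filter, Finset.mem_image] at h
  obtain ⟨⟨k, hk, hkv⟩, hv⟩ := h
  exact ⟨⟨k, Nat.lt_succ_iff.mp (Finset.mem_range.mp hk), hkv⟩, hv⟩

lemma int_le_of_lt_add_one {A B : ℤ} (h : (B : ℝ) < (A : ℝ) + 1) : (B : ℝ) ≤ (A : ℝ) := by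
  have h' : B < A + 1 := by exact_mod_cast h
  exact_mod_cast Int.lt_add_one_iff.mp h'

lemma int_add_one_le_of_lt {A B : ℤ} (h : (A : ℝ) < (B : ℝ)) : (A : ℝ) + 1 ≤ (B : ℝ) := by
  have h' : A < B := by exact_mod_cast h
  exact_mod_cast h'

lemma main {n r : ℕ} {p q : ℕ → ℕ} (hpn : p n = r) (hqn : q n = r) :
    ∀ (N : ℕ) (x : Fin n → ℝ), (fracset x).card ≤ N →
      (∀ i, 0 ≤ x i ∧ x i ≤ 1) →
      (∀ k ≤ n, (p k : ℝ) ≤ psum x k ∧ psum x k ≤ q k) →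
      x ∈ convexHull ℝ (basisSet n r p q) := by
  classical
  intro N
  induction N with
  | zero =>
    intro x hcard hx hS
    have hempty : fracset x = ∅ := Finset.card_eq_zero.mp (Nat.le_zero.mp hcard)
    have hint : ∀ k ≤ n, Int.fract (psum x k) = 0 := by
      intro k hk
      by_contra h
      have := mem_fracset hk h
      rw [hempty] at this
      exact absurd this (Finset.notMem_empty _)
    exact subset_convexHull ℝ _ (integral_mem hpn hqn x hx hS hint)
  | succ N ih =>
    intro x hcard hx hS
    by_cases hemp : fracset x = ∅
    · have hint : ∀ k ≤ n, Int.fract (psum x k) = 0 := by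
        intro k hk
        by_contra h
        have := mem_fracset hk h
        rw [hemp] at this
        exact absurd this (Finset.notMem_empty _)
      exact subset_convexHull ℝ _ (integral_mem hpn hqn x hx hS hint)
    have hne : (fracset x).Nonempty := Finset.nonempty_iff_ne_empty.mpr hemp
    set S : ℕ → ℝ := psum x with hSdef
    set t : ℝ := (fracset x).max' hne with htdef
    have htmem : t ∈ fracset x := Finset.max'_mem _ _
    obtain ⟨⟨k0, hk0n, hk0⟩, htne⟩ := fracset_spec htmem
    have ht0 : 0 < t := lt_of_le_of_ne (hk0 ▸ Int.fract_nonneg _) (Ne.symm htne)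
    have ht1 : t < 1 := hk0 ▸ Int.fract_lt_one _
    have hT'ne : (insert (0:ℝ) ((fracset x).erase t)).Nonempty := ⟨0, Finset.mem_insert_self _ _⟩
    set t' : ℝ := (insert (0:ℝ) ((fracset x).erase t)).max' hT'ne with ht'def
    have ht'0 : 0 ≤ t' := Finset.le_max' _ 0 (Finset.mem_insert_self _ _)
    have ht'cases : t' = 0 ∨ t' ∈ (fracset x).erase t := by
      rcases Finset.mem_insert.mp (Finset.max'_mem _ hT'ne) with h | h
      · exact Or.inl h
      · exact Or.inr h
    have ht'lt : t' < t := by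
      rcases ht'cases with h | h
      · rw [h]; exact ht0
      · exact lt_of_le_of_ne (Finset.le_max' _ _ (Finset.mem_of_mem_erase h))
          (Finset.ne_of_mem_erase h)
    have ht'1 : t' < 1 := lt_trans ht'lt ht1
    have hdich : ∀ k ≤ n, Int.fract (S k) = t ∨ Int.fract (S k) ≤ t' := by
      intro k hk
      by_cases h : Int.fract (S k) = t
      · exact Or.inl h
      right
      by_cases h0 : Int.fract (S k) = 0
      · rw [h0]; exact ht'0
      · exact Finset.le_max' _ _
          (Finset.mem_insert_of_mem (Finset.mem_erase.mpr ⟨h, mem_fracset hk h0⟩))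
    set χ : ℕ → ℝ := fun k => if Int.fract (S k) = t then 1 else 0 with hχdef
    have hχpos : ∀ k, Int.fract (S k) = t → χ k = 1 := by
      intro k h; simp [hχdef, h]
    have hχneg : ∀ k, Int.fract (S k) ≠ t → χ k = 0 := by
      intro k h; simp [hχdef, h]
    have hS0 : S 0 = 0 := psum_zero x
    have hχ0 : χ 0 = 0 := by
      apply hχneg
      rw [hS0, Int.fract_zero]
      exact ne_of_lt ht0
    have hrep : ∀ k, ((⌊S k⌋ : ℝ)) + Int.fract (S k) = S k := fun k => Int.floor_add_fract _
    have sum_shift : ∀ (c : ℝ), ∀ k ≤ n,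
        psum (fun i : Fin n => x i + c * (χ ((i : ℕ) + 1) - χ (i : ℕ))) k
          = S k + c * χ k := by
      intro c k
      induction k with
      | zero => intro _; rw [psum_zero, hS0, hχ0]; ring
      | succ k ihk =>
        intro hk
        have hkn : k < n := hk
        rw [psum_succ _ hkn, ihk hkn.le]
        have hx2 : S (k + 1) = S k + x ⟨k, hkn⟩ := psum_succ x hkn
        rw [hx2]
        simp only [Fin.val_mk]
        ring
    set xa : Fin n → ℝ := fun i => x i + (1 - t) * (χ ((i : ℕ) + 1) - χ (i : ℕ)) with hxadef
    set xb : Fin n → ℝ := fun i => x i + (t' - t) * (χ ((i : ℕ) + 1) - χ (i : ℕ)) with hxbdef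
    have hSa : ∀ k ≤ n, psum xa k = S k + (1 - t) * χ k := by
      intro k hk; rw [hxadef]; exact sum_shift (1 - t) k hk
    have hSb : ∀ k ≤ n, psum xb k = S k + (t' - t) * χ k := by
      intro k hk; rw [hxbdef]; exact sum_shift (t' - t) k hk
    -- coordinatewise bounds
    have key : ∀ i : Fin n, (0 ≤ xa i ∧ xa i ≤ 1) ∧ (0 ≤ xb i ∧ xb i ≤ 1) := by
      intro i
      have hkn : (i : ℕ) < n := i.isLt
      have hxai : xa i = x i + (1 - t) * (χ ((i : ℕ) + 1) - χ (i : ℕ)) := by rw [hxadef]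
      have hxbi : xb i = x i + (t' - t) * (χ ((i : ℕ) + 1) - χ (i : ℕ)) := by rw [hxbdef]
      have hstep : S ((i : ℕ) + 1) = S (i : ℕ) + x i := by
        have := psum_succ x hkn
        rwa [Fin.eta] at this
      have hd0 := (hx i).1
      have hd1 := (hx i).2
      have hf0 : 0 ≤ Int.fract (S (i : ℕ)) := Int.fract_nonneg _
      have hf0' : 0 ≤ Int.fract (S ((i : ℕ) + 1)) := Int.fract_nonneg _
      have hrk := hrep (i : ℕ)
      have hrk1 := hrep ((i : ℕ) + 1)
      by_cases h1 : Int.fract (S (i : ℕ)) = t <;>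
        by_cases h2 : Int.fract (S ((i : ℕ) + 1)) = t
      · -- both equal t
        rw [hxai, hxbi, hχpos _ h1, hχpos _ h2]
        constructor <;> constructor <;> linarith
      · -- χ k = 1, χ (k+1) = 0
        have hft1 : Int.fract (S ((i : ℕ) + 1)) ≤ t' := by
          rcases hdich ((i : ℕ) + 1) hkn with h | h
          · exact absurd h h2
          · exact h
        rw [hxai, hxbi, hχpos _ h1, hχneg _ h2]
        -- S k = A + t, S (k+1) = B + f1, x i = B + f1 - A - t
        have hAB : (⌊S (i : ℕ)⌋ : ℝ) + 1 ≤ (⌊S ((i : ℕ) + 1)⌋ : ℝ) := by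
          apply int_add_one_le_of_lt
          rw [h1] at hrk
          linarith
        have hBA : (⌊S ((i : ℕ) + 1)⌋ : ℝ) ≤ (⌊S (i : ℕ)⌋ : ℝ) + 1 := by
          have : (⌊S ((i : ℕ) + 1)⌋ : ℝ) < ((⌊S (i : ℕ)⌋ + 1 : ℤ) : ℝ) + 1 := by
            push_cast
            rw [h1] at hrk
            linarith
          have h' := int_le_of_lt_add_one this
          push_cast at h'
          linarith
        rw [h1] at hrk
        constructor <;> constructor <;> linarith
      · -- χ k = 0, χ (k+1) = 1
        have hft : Int.fract (S (i : ℕ)) ≤ t' := by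
          rcases hdich (i : ℕ) hkn.le with h | h
          · exact absurd h h1
          · exact h
        rw [hxai, hxbi, hχneg _ h1, hχpos _ h2]
        have hAB : (⌊S ((i : ℕ) + 1)⌋ : ℝ) ≤ (⌊S (i : ℕ)⌋ : ℝ) := by
          apply int_le_of_lt_add_one
          rw [h2] at hrk1
          linarith
        have hBA : (⌊S (i : ℕ)⌋ : ℝ) ≤ (⌊S ((i : ℕ) + 1)⌋ : ℝ) := by
          have : (⌊S (i : ℕ)⌋ : ℝ) < (⌊S ((i : ℕ) + 1)⌋ : ℝ) + 1 := by
            rw [h2] at hrk1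
            linarith
          exact int_le_of_lt_add_one this
        rw [h2] at hrk1
        constructor <;> constructor <;> linarith
      · -- both ≠ t
        rw [hxai, hxbi, hχneg _ h1, hχneg _ h2]
        constructor <;> constructor <;> linarith
    -- prefix-sum bounds for xa
    have hSa_bounds : ∀ k ≤ n, (p k : ℝ) ≤ psum xa k ∧ psum xa k ≤ q k := by
      intro k hk
      rw [hSa k hk]
      obtain ⟨hp, hq⟩ := hS k hk
      by_cases h1 : Int.fract (S k) = t
      · rw [hχpos _ h1]
        have hrk := hrep k
        rw [h1] at hrk
        constructor
        · linarith
        · have hlt : (⌊S k⌋ : ℝ) < ((q k : ℤ) : ℝ) := by push_cast; linarith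
          have := int_add_one_le_of_lt hlt
          push_cast at this
          linarith
      · rw [hχneg _ h1]
        constructor <;> linarith
    have hSb_bounds : ∀ k ≤ n, (p k : ℝ) ≤ psum xb k ∧ psum xb k ≤ q k := by
      intro k hk
      rw [hSb k hk]
      obtain ⟨hp, hq⟩ := hS k hk
      by_cases h1 : Int.fract (S k) = t
      · rw [hχpos _ h1]
        have hrk := hrep k
        rw [h1] at hrk
        constructor
        · have hlt : ((p k : ℤ) : ℝ) < (⌊S k⌋ : ℝ) + 1 := by push_cast; linarith
          have := int_le_of_lt_add_one hlt
          push_cast at this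
          linarith
        · linarith
      · rw [hχneg _ h1]
        constructor <;> linarith
    -- fracset inclusions
    have hsuba : fracset xa ⊆ (fracset x).erase t := by
      intro v hv
      obtain ⟨⟨k, hk, hkv⟩, hv0⟩ := fracset_spec hv
      rw [hSa k hk] at hkv
      by_cases h1 : Int.fract (S k) = t
      · exfalso
        rw [hχpos _ h1, mul_one] at hkv
        have heq : S k + (1 - t) = ((⌊S k⌋ + 1 : ℤ) : ℝ) := by
          have := hrep k; rw [h1] at this; push_cast; linarith
        rw [heq, Int.fract_intCast] at hkv
        exact hv0 hkv.symm
      · rw [hχneg _ h1, mul_zero, add_zero] at hkv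
        refine Finset.mem_erase.mpr ⟨?_, ?_⟩
        · rw [← hkv]; exact h1
        · rw [← hkv]; exact mem_fracset hk (fun h => hv0 (hkv ▸ h))
    have hsubb : fracset xb ⊆ (fracset x).erase t := by
      intro v hv
      obtain ⟨⟨k, hk, hkv⟩, hv0⟩ := fracset_spec hv
      rw [hSb k hk] at hkv
      by_cases h1 : Int.fract (S k) = t
      · rw [hχpos _ h1, mul_one] at hkv
        have heq : S k + (t' - t) = (⌊S k⌋ : ℝ) + t' := by
          have := hrep k; rw [h1] at this; linarith
        rw [heq, Int.fract_intCast_add, Int.fract_eq_self.mpr ⟨ht'0, ht'1⟩] at hkv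
        rcases ht'cases with h0 | hmem
        · exact absurd (hkv ▸ h0) hv0
        · exact hkv ▸ hmem
      · rw [hχneg _ h1, mul_zero, add_zero] at hkv
        refine Finset.mem_erase.mpr ⟨?_, ?_⟩
        · rw [← hkv]; exact h1
        · rw [← hkv]; exact mem_fracset hk (fun h => hv0 (hkv ▸ h))
    have hpos : 0 < (fracset x).card := Finset.card_pos.mpr hne
    have hNa : (fracset xa).card ≤ N := by
      have h1 := Finset.card_le_card hsuba
      rw [Finset.card_erase_of_mem htmem] at h1
      omega
    have hNb : (fracset xb).card ≤ N := by
      have h1 := Finset.card_le_card hsubb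
      rw [Finset.card_erase_of_mem htmem] at h1
      omega
    have hma := ih xa hNa (fun i => (key i).1) hSa_bounds
    have hmb := ih xb hNb (fun i => (key i).2) hSb_bounds
    set lam : ℝ := (t - t') / (1 - t') with hlamdef
    set mu : ℝ := (1 - t) / (1 - t') with hmudef
    have hden : (0 : ℝ) < 1 - t' := by linarith
    have hden' : (1 : ℝ) - t' ≠ 0 := ne_of_gt hden
    have hlam0 : 0 ≤ lam := div_nonneg (by linarith) hden.le
    have hmu0 : 0 ≤ mu := div_nonneg (by linarith) hden.le
    have hsum1 : lam + mu = 1 := by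
      rw [hlamdef, hmudef]
      field_simp
      ring
    have hcomb := (convex_convexHull ℝ (basisSet n r p q)) hma hmb hlam0 hmu0 hsum1
    have hxeq : x = lam • xa + mu • xb := by
      funext i
      have hxai : xa i = x i + (1 - t) * (χ ((i : ℕ) + 1) - χ (i : ℕ)) := by rw [hxadef]
      have hxbi : xb i = x i + (t' - t) * (χ ((i : ℕ) + 1) - χ (i : ℕ)) := by rw [hxbdef]
      have : (lam • xa + mu • xb) i = lam * xa i + mu * xb i := rfl
      rw [this, hxai, hxbi, hlamdef, hmudef]
      field_simp
      ring
    rw [hxeq]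
    exact hcomb


end Stmt10

/-- let `P, Q` be lattice paths from `(0,0)` to `(m,r)` with `P` never above
`Q`, described by their prefix North-step counts `p i`, `q i`.  The lattice path matroid
polytope `P(M[P,Q])` — the convex hull of the indicator vectors of the bases, i.e. of the
`r`-subsets `B` with `p i ≤ #(B ∩ [0,i)) ≤ q i` for all `i` — equals the set of points
`x ∈ ℝ^{m+r}` with `0 ≤ x i ≤ 1` and `p k ≤ x₁ + ⋯ + x_k ≤ q k` for all `k ≤ m + r`
(in particular `x₁ + ⋯ + x_{m+r} = r`). -/
theorem stmt10 (m r : ℕ) (p q : ℕ → ℕ)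
    (hp0 : p 0 = 0) (hq0 : q 0 = 0)
    (hpstep : ∀ i, p (i + 1) = p i ∨ p (i + 1) = p i + 1)
    (hqstep : ∀ i, q (i + 1) = q i ∨ q (i + 1) = q i + 1)
    (hpend : p (m + r) = r) (hqend : q (m + r) = r)
    (hpq : ∀ i, p i ≤ q i) :
    convexHull ℝ {x : Fin (m + r) → ℝ | ∃ B : Finset (Fin (m + r)), B.card = r ∧
        (∀ i ≤ m + r, p i ≤ (B.filter (fun j : Fin (m + r) => (j : ℕ) < i)).card ∧
          (B.filter (fun j : Fin (m + r) => (j : ℕ) < i)).card ≤ q i) ∧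
        x = fun i => if i ∈ B then 1 else 0}
      = {x : Fin (m + r) → ℝ | (∀ i, 0 ≤ x i ∧ x i ≤ 1) ∧
          ∀ k ≤ m + r,
            (p k : ℝ) ≤ ∑ j ∈ Finset.univ.filter (fun j : Fin (m + r) => (j : ℕ) < k), x j ∧
            ∑ j ∈ Finset.univ.filter (fun j : Fin (m + r) => (j : ℕ) < k), x j ≤ (q k : ℝ)} := by
  classical
  apply Set.Subset.antisymm
  · apply convexHull_min
    · rintro x ⟨B, hBcard, hB, rfl⟩
      refine ⟨fun i => ?_, fun k hk => ?_⟩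
      · by_cases h : i ∈ B <;> simp [h]
      · rw [Stmt10.sum_filter_eq_psum _ hk, Stmt10.psum_indicator B hk]
        exact ⟨by exact_mod_cast (hB k hk).1, by exact_mod_cast (hB k hk).2⟩
    · intro y hy z hz a b ha hb hab
      refine ⟨fun i => ?_, fun k hk => ?_⟩
      · have h1 := hy.1 i
        have h2 := hz.1 i
        have hcoord : (a • y + b • z) i = a * y i + b * z i := rfl
        rw [hcoord]
        constructor
        · have := mul_nonneg ha h1.1
          have := mul_nonneg hb h2.1
          linarith
        · have := mul_le_mul_of_nonneg_left h1.2 ha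
          have := mul_le_mul_of_nonneg_left h2.2 hb
          linarith
      · have h1 := hy.2 k hk
        have h2 := hz.2 k hk
        have hsum : ∑ j ∈ Finset.univ.filter (fun j : Fin (m + r) => (j : ℕ) < k),
              (a • y + b • z) j
            = a * (∑ j ∈ Finset.univ.filter (fun j : Fin (m + r) => (j : ℕ) < k), y j)
              + b * (∑ j ∈ Finset.univ.filter (fun j : Fin (m + r) => (j : ℕ) < k), z j) := by
          simp only [Pi.add_apply, Pi.smul_apply, smul_eq_mul]
          rw [Finset.sum_add_distrib, Finset.mul_sum, Finset.mul_sum]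
        rw [hsum]
        constructor
        · have := mul_le_mul_of_nonneg_left h1.1 ha
          have := mul_le_mul_of_nonneg_left h2.1 hb
          nlinarith
        · have := mul_le_mul_of_nonneg_left h1.2 ha
          have := mul_le_mul_of_nonneg_left h2.2 hb
          nlinarith
  · intro x hx
    obtain ⟨hx01, hsums⟩ := hx
    have hS : ∀ k ≤ m + r, (p k : ℝ) ≤ Stmt10.psum x k ∧ Stmt10.psum x k ≤ q k := by
      intro k hk
      rw [← Stmt10.sum_filter_eq_psum x hk]
      exact hsums k hk
    exact Stmt10.main hpend hqend (Stmt10.fracset x).card x le_rfl hx01 hS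
end
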